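/- arXiv:2203.04233 — 4 statements merged into one kernel-verified Lean document; each statement's English description precedes it below -/
import Mathlib

section
/- Let V be a finite-dimensional real inner product space endowed with an r-fold vector cross product χ. Then the constant-curvature operator R^Id satisfies the first CR-integrability condition associated with χ. More precisely, for every orthonormal r-tuple (w₁,…,w_r) in V and all z₁, z₂ ∈ V orthogonal to each of w₂,…,w_r one has ⟨R^Id(w₁,w₂)z₁, z₂⟩ = 0; consequently, for every z ∈ V orthogonal to each of w₂,…,w_r, P(R^Id(w₁,w₂)(χ(w₂,…,w_r,z))) = χ(w₂,…,w_r, P(R^Id(w₁,w₂)z)), where P is the orthogonal projection of V onto the orthogonal complement of span{w₂,…,w_r}. -/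
open RealInnerProductSpace

variable {V : Type*} [NormedAddCommGroup V] [InnerProductSpace ℝ V]

/-- An `r`-fold vector cross product on a real inner product space: an alternating
multilinear map `χ` whose value is orthogonal to each of its arguments and whose
squared norm is the Gram determinant of the arguments. -/
def IsVCP {r : ℕ} (χ : AlternatingMap ℝ V V (Fin r)) : Prop :=
  (∀ v : Fin r → V, ∀ i : Fin r, ⟪χ v, v i⟫ = 0) ∧
  (∀ v : Fin r → V, ⟪χ v, χ v⟫ = (Matrix.of fun i j : Fin r => ⟪v i, v j⟫).det)

/-- An algebraic curvature operator: a bilinear map `V × V → End(V)` that is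
antisymmetric, takes skew-adjoint values, and satisfies the first Bianchi identity. -/
def IsAlgCurvature (R : V →ₗ[ℝ] V →ₗ[ℝ] V →ₗ[ℝ] V) : Prop :=
  (∀ x y, R x y = - R y x) ∧
  (∀ x y z w, ⟪R x y z, w⟫ = - ⟪R x y w, z⟫) ∧
  (∀ x y z, R x y z + R y z x + R z x y = 0)

/-- Orthogonal projection onto the orthogonal complement of the span of `S`. -/
noncomputable def projPerp [FiniteDimensional ℝ V] (S : Set V) (z : V) : V :=
  (Submodule.orthogonalProjectionOnto (Submodule.span ℝ S)ᗮ z : V)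

/-- The constant-curvature operator `R^Id(x,y)z = ⟪y,z⟫ • x - ⟪x,z⟫ • y`. -/
noncomputable def RId : V →ₗ[ℝ] V →ₗ[ℝ] V →ₗ[ℝ] V :=
  LinearMap.mk₂ ℝ
    (fun x y =>
      { toFun := fun z => ⟪y, z⟫ • x - ⟪x, z⟫ • y
        map_add' := fun a b => by simp only [inner_add_right, add_smul]; abel
        map_smul' := fun c a => by
          simp only [inner_smul_right, RingHom.id_apply, smul_sub, smul_smul] })
    (fun x x' y => by ext z; simp [inner_add_left, add_smul]; abel)
    (fun c x y => by ext z; simp [real_inner_smul_left, smul_sub, smul_smul, mul_comm])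
    (fun x y y' => by ext z; simp [inner_add_left, add_smul]; abel)
    (fun c x y => by ext z; simp [real_inner_smul_left, smul_sub, smul_smul, mul_comm])

/-- The first CR-integrability condition for an algebraic curvature operator `R`
with respect to an `(m+2)`-fold VCP `χ`: for every orthonormal `(m+2)`-tuple
`w = (w₁, …, w_r)` and every `z` orthogonal to `w₂, …, w_r`, the orthogonal
projection `P` onto `span{w₂,…,w_r}ᗮ` satisfies
`P (R(w₁,w₂) (χ(w₂,…,w_r,z))) = χ(w₂,…,w_r, P (R(w₁,w₂) z))`. -/
def FirstCR [FiniteDimensional ℝ V] {m : ℕ} (χ : AlternatingMap ℝ V V (Fin (m + 2)))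
    (R : V →ₗ[ℝ] V →ₗ[ℝ] V →ₗ[ℝ] V) : Prop :=
  ∀ w : Fin (m + 2) → V, Orthonormal ℝ w → ∀ z : V,
    (∀ i : Fin (m + 1), ⟪z, Fin.tail w i⟫ = 0) →
    projPerp (Set.range (Fin.tail w)) (R (w 0) (w 1) (χ (Fin.snoc (Fin.tail w) z))) =
      χ (Fin.snoc (Fin.tail w) (projPerp (Set.range (Fin.tail w)) (R (w 0) (w 1) z)))

lemma projPerp_zero_of_mem {V : Type*} [NormedAddCommGroup V] [InnerProductSpace ℝ V]
    [FiniteDimensional ℝ V] {S : Set V} {x : V} (hx : x ∈ Submodule.span ℝ S) :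
    projPerp S x = 0 := by
  unfold projPerp
  rw [Submodule.orthogonalProjectionOnto_apply_of_mem_orthogonal]
  · simp
  · exact (Submodule.span ℝ S).le_orthogonal_orthogonal hx

lemma RId_apply {V : Type*} [NormedAddCommGroup V] [InnerProductSpace ℝ V] (x y z : V) :
    RId x y z = ⟪y, z⟫ • x - ⟪x, z⟫ • y := rfl

/-- The constant-curvature operator `R^Id` satisfies the first CR-integrability
condition associated with any `r`-fold VCP `χ` (here `r = m+2`): for every
orthonormal `r`-tuple `w` and all `z₁, z₂` orthogonal to `w₂,…,w_r` one has
`⟪R^Id(w₁,w₂) z₁, z₂⟫ = 0`; consequently the projection identity of the first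
CR-integrability condition holds for `R^Id`. -/
theorem rId_satisfies_firstCR {V : Type*} [NormedAddCommGroup V] [InnerProductSpace ℝ V]
    [FiniteDimensional ℝ V] {m : ℕ}
    (χ : AlternatingMap ℝ V V (Fin (m + 2))) (hχ : IsVCP χ) :
    (∀ w : Fin (m + 2) → V, Orthonormal ℝ w → ∀ z₁ z₂ : V,
      (∀ i : Fin (m + 1), ⟪z₁, Fin.tail w i⟫ = 0) →
      (∀ i : Fin (m + 1), ⟪z₂, Fin.tail w i⟫ = 0) →
      ⟪RId (w 0) (w 1) z₁, z₂⟫ = 0) ∧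
    FirstCR χ (RId (V := V)) := by
  have hproj : ∀ w : Fin (m + 2) → V, ∀ c : ℝ,
      projPerp (Set.range (Fin.tail w)) (c • (w 1)) = 0 := by
    intro w c
    have h1 : w 1 ∈ Submodule.span ℝ (Set.range (Fin.tail w)) := by
      apply Submodule.subset_span
      exact ⟨0, rfl⟩
    have : projPerp (Set.range (Fin.tail w)) (w 1) = 0 := projPerp_zero_of_mem h1
    unfold projPerp at this ⊢
    rw [map_smul]
    simp [this]
  have key : ∀ w : Fin (m + 2) → V, ∀ z : V, ⟪w 1, z⟫ = 0 →
      RId (w 0) (w 1) z = (- ⟪w 0, z⟫) • (w 1) := by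
    intro w z hz
    rw [RId_apply, hz]
    simp
  constructor
  · intro w _ z₁ z₂ hz₁ hz₂
    have h1 : ⟪w 1, z₁⟫ = 0 := by
      rw [real_inner_comm]; exact hz₁ 0
    have h2 : ⟪w 1, z₂⟫ = 0 := by rw [real_inner_comm]; exact hz₂ 0
    rw [key w z₁ h1, real_inner_smul_left, h2]
    ring
  · intro w _ z hz
    have hsnoc0 : (Fin.snoc (Fin.tail w) z : Fin (m + 2) → V) 0 = w 1 := by
      have : (0 : Fin (m + 2)) = Fin.castSucc 0 := rfl
      rw [this, Fin.snoc_castSucc]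
      rfl
    -- RHS: projection of RId ... z is 0
    have h1 : ⟪w 1, z⟫ = 0 := by rw [real_inner_comm]; exact hz 0
    have hRz : projPerp (Set.range (Fin.tail w)) (RId (w 0) (w 1) z) = 0 := by
      rw [key w z h1]; exact hproj w _
    have hχ1 : ⟪w 1, χ (Fin.snoc (Fin.tail w) z)⟫ = 0 := by
      rw [real_inner_comm]
      have := hχ.1 (Fin.snoc (Fin.tail w) z) 0
      rwa [hsnoc0] at this
    rw [key w _ hχ1, hproj w, hRz]
    have : (Fin.snoc (Fin.tail w) (0 : V) : Fin (m + 2) → V) =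
        Function.update (Fin.snoc (Fin.tail w) (0 : V) : Fin (m + 2) → V)
          (Fin.last (m + 1)) (0 : V) := by
      rw [eq_comm, Function.update_eq_self_iff]
      simp
    rw [this, χ.map_update_zero]
end

section
/- Let V be a 7-dimensional real inner product space endowed with a 2-fold vector cross product χ, and let R be an algebraic curvature operator on V satisfying the first CR-integrability condition associated with χ (i.e., for every orthonormal pair (w₁,w₂) in V and every z ∈ V with z ⊥ w₂ one has P(R(w₁,w₂)(χ(w₂,z))) = χ(w₂, P(R(w₁,w₂)z)), where P is the orthogonal projection of V onto {w₂}^⊥). Then for all x, y ∈ V: R(x,y)z = 0 whenever z is orthogonal to both x and y, and R(x,y) maps span{x,y} into itself (i.e., R(x,y) ∈ 𝔰𝔬(E_{x∧y}) for every x, y). -/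
open RealInnerProductSpace

variable {V : Type*} [NormedAddCommGroup V] [InnerProductSpace ℝ V]

set_option linter.unusedSectionVars false
set_option maxHeartbeats 4000000

noncomputable def cp (χ : AlternatingMap ℝ V V (Fin 2)) (u v : V) : V := χ ![u, v]

lemma cp_add_left (χ : AlternatingMap ℝ V V (Fin 2)) (u u' v : V) :
    cp χ (u+u') v = cp χ u v + cp χ u' v := by
  have h := χ.map_update_add ![u,v] 0 u u'
  have e : ∀ w : V, Function.update ![u,v] 0 w = ![w,v] := by
    intro w; funext i; fin_cases i <;> simp
  rw [e, e, e] at h; exact h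

lemma cp_add_right (χ : AlternatingMap ℝ V V (Fin 2)) (u v v' : V) :
    cp χ u (v+v') = cp χ u v + cp χ u v' := by
  have h := χ.map_update_add ![u,v] 1 v v'
  have e : ∀ w : V, Function.update ![u,v] 1 w = ![u,w] := by
    intro w; funext i; fin_cases i <;> simp
  rw [e, e, e] at h; exact h

lemma cp_smul_left (χ : AlternatingMap ℝ V V (Fin 2)) (t : ℝ) (u v : V) :
    cp χ (t • u) v = t • cp χ u v := by
  have h := χ.map_update_smul ![u,v] 0 t u
  have e : ∀ w : V, Function.update ![u,v] 0 w = ![w,v] := by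
    intro w; funext i; fin_cases i <;> simp
  rw [e, e] at h; exact h

lemma cp_smul_right (χ : AlternatingMap ℝ V V (Fin 2)) (t : ℝ) (u v : V) :
    cp χ u (t • v) = t • cp χ u v := by
  have h := χ.map_update_smul ![u,v] 1 t v
  have e : ∀ w : V, Function.update ![u,v] 1 w = ![u,w] := by
    intro w; funext i; fin_cases i <;> simp
  rw [e, e] at h; exact h

lemma cp_self (χ : AlternatingMap ℝ V V (Fin 2)) (v : V) : cp χ v v = 0 :=
  χ.map_eq_zero_of_eq ![v,v] (i := 0) (j := 1) rfl (by decide)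

lemma cp_anti (χ : AlternatingMap ℝ V V (Fin 2)) (u v : V) : cp χ u v = - cp χ v u := by
  have h := cp_self χ (u+v)
  rw [cp_add_left, cp_add_right, cp_add_right, cp_self, cp_self] at h
  have h2 : cp χ u v + cp χ v u = 0 := by rw [← h]; abel
  linear_combination (norm := module) h2

lemma cp_neg_right (χ : AlternatingMap ℝ V V (Fin 2)) (u w : V) : cp χ u (-w) = - cp χ u w := by
  have h := cp_smul_right χ (-1) u w
  simpa using h

section
variable {χ : AlternatingMap ℝ V V (Fin 2)} (hχ : IsVCP χ)
include hχ

lemma orth1 (u v : V) : ⟪cp χ u v, u⟫ = 0 := by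
  have := hχ.1 ![u,v] 0; simpa [cp] using this
lemma orth2 (u v : V) : ⟪cp χ u v, v⟫ = 0 := by
  have := hχ.1 ![u,v] 1; simpa [cp] using this
lemma nrm' (u v : V) : ⟪cp χ u v, cp χ u v⟫ = ⟪u,u⟫*⟪v,v⟫ - ⟪u,v⟫*⟪u,v⟫ := by
  have h := hχ.2 ![u,v]
  rw [Matrix.det_fin_two] at h
  simp only [Matrix.of_apply, Matrix.cons_val_zero, Matrix.cons_val_one, Matrix.head_cons] at h
  rw [real_inner_comm u v] at h
  simpa [cp] using h
lemma adj (u a b : V) : ⟪cp χ u a, b⟫ = -⟪a, cp χ u b⟫ := by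
  have h := orth2 hχ u (a+b)
  rw [cp_add_right] at h
  simp only [inner_add_left, inner_add_right] at h
  rw [orth2 hχ u a, orth2 hχ u b] at h
  have hc := real_inner_comm (cp χ u b) a
  linarith [h, hc]
lemma I2r (u a b : V) : ⟪cp χ u a, cp χ u b⟫ = ⟪u,u⟫*⟪a,b⟫ - ⟪u,a⟫*⟪u,b⟫ := by
  have h := nrm' hχ u (a+b)
  rw [cp_add_right] at h
  simp only [inner_add_left, inner_add_right] at h
  rw [real_inner_comm a b, real_inner_comm (cp χ u a) (cp χ u b)] at h
  linear_combination (h - nrm' hχ u a - nrm' hχ u b) / 2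
lemma I2l (u w a : V) : ⟪cp χ u a, cp χ w a⟫ = ⟪u,w⟫*⟪a,a⟫ - ⟪u,a⟫*⟪w,a⟫ := by
  have h := nrm' hχ (u+w) a
  rw [cp_add_left] at h
  simp only [inner_add_left, inner_add_right] at h
  rw [real_inner_comm u w, real_inner_comm (cp χ u a) (cp χ w a)] at h
  linear_combination (h - nrm' hχ u a - nrm' hχ w a) / 2
lemma I4 (u a : V) : cp χ u (cp χ u a) = ⟪u,a⟫ • u - ⟪u,u⟫ • a := by
  apply ext_inner_right ℝ
  intro w
  rw [adj hχ, I2r hχ]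
  simp only [inner_sub_left, real_inner_smul_left]
  ring
lemma I5 (u w a : V) : cp χ u (cp χ w a) + cp χ w (cp χ u a)
    = ⟪u,a⟫ • w + ⟪w,a⟫ • u - (2*⟪u,w⟫) • a := by
  have h := I4 hχ (u+w) a
  rw [cp_add_left, cp_add_left, cp_add_right, cp_add_right] at h
  simp only [inner_add_left, inner_add_right] at h
  rw [real_inner_comm u w] at h
  linear_combination (norm := module) h - I4 hχ u a - I4 hχ w a
end

lemma mem_perp_single (v w : V) (hw : ⟪w,v⟫ = 0) :
    w ∈ (Submodule.span ℝ ({v} : Set V))ᗮ := by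
  rw [Submodule.mem_orthogonal]
  intro u hu
  obtain ⟨t, rfl⟩ := Submodule.mem_span_singleton.1 hu
  rw [real_inner_smul_left, real_inner_comm w v] at *
  rw [hw]; ring

lemma projPerp_inner [FiniteDimensional ℝ V] (S : Set V) (a w : V)
    (hw : w ∈ (Submodule.span ℝ S)ᗮ) : ⟪projPerp S a, w⟫ = ⟪a, w⟫ := by
  have hmem := Submodule.sub_starProjection_mem_orthogonal (K := (Submodule.span ℝ S)ᗮ) a
  have h0 : ⟪w, a - projPerp S a⟫ = 0 :=
    Submodule.inner_right_of_mem_orthogonal hw hmem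
  rw [inner_sub_right] at h0
  have c1 := real_inner_comm w a
  have c2 := real_inner_comm w (projPerp S a)
  unfold projPerp at *
  linarith

lemma on2 (u v : V) (hu : ⟪u,u⟫=1) (hv : ⟪v,v⟫=1) (huv : ⟪u,v⟫=0) :
    Orthonormal ℝ ![u,v] := by
  rw [orthonormal_iff_ite]
  have hvu : ⟪v,u⟫ = 0 := by rw [real_inner_comm u v]; exact huv
  intro i j
  have hnu : ‖u‖ = 1 := by rw [norm_eq_sqrt_real_inner, hu, Real.sqrt_one]
  have hnv : ‖v‖ = 1 := by rw [norm_eq_sqrt_real_inner, hv, Real.sqrt_one]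
  fin_cases i <;> fin_cases j <;> simp [hu, hv, huv, hvu, hnu, hnv]

lemma criE (R : V →ₗ[ℝ] V →ₗ[ℝ] V →ₗ[ℝ] V) (u v b : V) {t f : V} (h : t = f) :
    ⟪R u v t, b⟫ = ⟪R u v f, b⟫ := by rw [h]
lemma criN (R : V →ₗ[ℝ] V →ₗ[ℝ] V →ₗ[ℝ] V) (u v b : V) {t f : V} (h : t = -f) :
    ⟪R u v t, b⟫ = -⟪R u v f, b⟫ := by rw [h, map_neg, inner_neg_left]
lemma croE (R : V →ₗ[ℝ] V →ₗ[ℝ] V →ₗ[ℝ] V) (u v d : V) {t f : V} (h : t = f) :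
    ⟪R u v d, t⟫ = ⟪R u v d, f⟫ := by rw [h]
lemma croN (R : V →ₗ[ℝ] V →ₗ[ℝ] V →ₗ[ℝ] V) (u v d : V) {t f : V} (h : t = -f) :
    ⟪R u v d, t⟫ = -⟪R u v d, f⟫ := by rw [h, inner_neg_right]

section
variable [FiniteDimensional ℝ V] {χ : AlternatingMap ℝ V V (Fin 2)}
  {R : V →ₗ[ℝ] V →ₗ[ℝ] V →ₗ[ℝ] V}

lemma RvvL (hR : IsAlgCurvature R) (v : V) : R v v = 0 := by
  have h : R v v + R v v = 0 := eq_neg_iff_add_eq_zero.1 (hR.1 v v)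
  linear_combination (norm := module) ((1:ℝ)/2) • h

lemma star0 (hχ : IsVCP χ) (hCR : FirstCR (m := 0) χ R) (u v a b : V)
    (hu : ⟪u,u⟫=1) (hv : ⟪v,v⟫=1) (huv : ⟪u,v⟫=0) (hav : ⟪a,v⟫=0) (hbv : ⟪b,v⟫=0) :
    ⟪R u v (cp χ v a), b⟫ + ⟪R u v a, cp χ v b⟫ = 0 := by
  have htail : Fin.tail ![u,v] = fun _ : Fin 1 => v := by
    funext i; fin_cases i; rfl
  have hsnoc : ∀ z : V, Fin.snoc (fun _ : Fin 1 => v) z = ![v,z] := by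
    intro z; funext i; fin_cases i <;> simp [Fin.snoc]
  have h := hCR ![u,v] (on2 u v hu hv huv) a (by intro i; rw [htail]; exact hav)
  rw [htail, Set.range_const, hsnoc, hsnoc] at h
  have h0 : (![u,v] : Fin 2 → V) 0 = u := rfl
  have h1 : (![u,v] : Fin 2 → V) 1 = v := rfl
  rw [h0, h1] at h
  have e1 : ⟪R u v (cp χ v a), b⟫ = ⟪projPerp {v} (R u v (cp χ v a)), b⟫ :=
    (projPerp_inner _ _ _ (mem_perp_single v b hbv)).symm
  rw [e1]
  show ⟪projPerp {v} (R u v (χ ![v, a])), b⟫ + _ = 0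
  rw [h]
  have e2 : ⟪cp χ v (projPerp {v} (R u v a)), b⟫ = -⟪projPerp {v} (R u v a), cp χ v b⟫ :=
    adj hχ v _ b
  have e3 : ⟪projPerp {v} (R u v a), cp χ v b⟫ = ⟪R u v a, cp χ v b⟫ :=
    projPerp_inner _ _ _ (mem_perp_single v (cp χ v b) (orth1 hχ v b))
  show ⟪cp χ v (projPerp {v} (R u v a)), b⟫ + _ = 0
  rw [e2, e3]; ring

lemma starU (hχ : IsVCP χ) (hR : IsAlgCurvature R) (hCR : FirstCR (m := 0) χ R)
    (u v a b : V) (hv : ⟪v,v⟫=1) (hav : ⟪a,v⟫=0) (hbv : ⟪b,v⟫=0) :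
    ⟪R u v (cp χ v a), b⟫ + ⟪R u v a, cp χ v b⟫ = 0 := by
  set u' := u - ⟪u,v⟫ • v with hu'
  have hRuv : R u v = R u' v := by
    rw [hu', map_sub, map_smul]
    simp [LinearMap.sub_apply, LinearMap.smul_apply, RvvL hR]
  have hu'v : ⟪u',v⟫ = 0 := by
    rw [hu', inner_sub_left, real_inner_smul_left, hv]; ring
  rw [hRuv]
  by_cases hz : u' = 0
  · rw [hz]; simp
  · have hn : ‖u'‖ ≠ 0 := norm_ne_zero_iff.2 hz
    have hvv' : ⟪u',u'⟫ = ‖u'‖*‖u'‖ := real_inner_self_eq_norm_mul_norm u'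
    set w := ‖u'‖⁻¹ • u' with hw
    have hwn : ⟪w,w⟫ = 1 := by
      rw [hw, real_inner_smul_left, real_inner_smul_right, hvv']
      field_simp
    have hwv : ⟪w,v⟫ = 0 := by
      rw [hw, real_inner_smul_left, hu'v]; ring
    have h := star0 hχ hCR w v a b hwn hv hwv hav hbv
    simp only [hw, map_smul, LinearMap.smul_apply, real_inner_smul_left] at h
    have hcan : ‖u'‖ * ‖u'‖⁻¹ = 1 := mul_inv_cancel₀ hn
    linear_combination ‖u'‖ * h - (⟪R u' v (cp χ v a), b⟫ + ⟪R u' v a, cp χ v b⟫) * hcan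

lemma starT (hχ : IsVCP χ) (hR : IsAlgCurvature R) (hCR : FirstCR (m := 0) χ R)
    (u v a b : V) (hv : ⟪v,v⟫=1) (hav : ⟪a,v⟫=0) (hbv : ⟪b,v⟫=0) (t : ℝ) :
    ⟪R u (t • v) (cp χ (t • v) a), b⟫ + ⟪R u (t • v) a, cp χ (t • v) b⟫ = 0 := by
  simp only [map_smul, cp_smul_left, LinearMap.smul_apply, real_inner_smul_left,
    real_inner_smul_right, smul_smul]
  have h := starU hχ hR hCR u v a b hv hav hbv
  linear_combination (t*t) * h

lemma starNZ (hχ : IsVCP χ) (hR : IsAlgCurvature R) (hCR : FirstCR (m := 0) χ R)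
    (u v a b : V) (hvz : v ≠ 0) (hav : ⟪a,v⟫=0) (hbv : ⟪b,v⟫=0) :
    ⟪R u v (cp χ v a), b⟫ + ⟪R u v a, cp χ v b⟫ = 0 := by
  have hn : ‖v‖ ≠ 0 := norm_ne_zero_iff.2 hvz
  have hvv : ⟪v,v⟫ = ‖v‖*‖v‖ := real_inner_self_eq_norm_mul_norm v
  have hwn : ⟪‖v‖⁻¹ • v, ‖v‖⁻¹ • v⟫ = 1 := by
    rw [real_inner_smul_left, real_inner_smul_right, hvv]; field_simp
  have hav' : ⟪a, ‖v‖⁻¹ • v⟫ = 0 := by rw [real_inner_smul_right, hav]; ring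
  have hbv' : ⟪b, ‖v‖⁻¹ • v⟫ = 0 := by rw [real_inner_smul_right, hbv]; ring
  have h := starT hχ hR hCR u (‖v‖⁻¹ • v) a b hwn hav' hbv' ‖v‖
  rw [smul_smul, mul_inv_cancel₀ hn, one_smul] at h
  exact h

lemma starP (hχ : IsVCP χ) (hR : IsAlgCurvature R) (hCR : FirstCR (m := 0) χ R)
    (u v₁ v₂ a b : V) (hv1 : ⟪v₁,v₁⟫=1) (hv2 : ⟪v₂,v₂⟫=1) (h12 : ⟪v₁,v₂⟫=0)
    (hav1 : ⟪a,v₁⟫=0) (hav2 : ⟪a,v₂⟫=0) (hbv1 : ⟪b,v₁⟫=0) (hbv2 : ⟪b,v₂⟫=0) :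
    ⟪R u v₁ (cp χ v₂ a), b⟫ + ⟪R u v₁ a, cp χ v₂ b⟫
      + ⟪R u v₂ (cp χ v₁ a), b⟫ + ⟪R u v₂ a, cp χ v₁ b⟫ = 0 := by
  have hvz : (v₁ + v₂) ≠ 0 := by
    intro h
    have h2 : ⟪v₁, v₁ + v₂⟫ = 0 := by rw [h, inner_zero_right]
    rw [inner_add_right, hv1, h12] at h2; linarith
  have h := starNZ hχ hR hCR u (v₁+v₂) a b hvz
    (by rw [inner_add_right, hav1, hav2]; ring)
    (by rw [inner_add_right, hbv1, hbv2]; ring)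
  simp only [map_add, cp_add_left, LinearMap.add_apply, inner_add_left, inner_add_right] at h
  have h1 := starU hχ hR hCR u v₁ a b hv1 hav1 hbv1
  have h2 := starU hχ hR hCR u v₂ a b hv2 hav2 hbv2
  linear_combination h - h1 - h2
end

lemma coreLemma [FiniteDimensional ℝ V] (h7 : Module.finrank ℝ V = 7)
    {χ : AlternatingMap ℝ V V (Fin 2)} (hχ : IsVCP χ)
    {R : V →ₗ[ℝ] V →ₗ[ℝ] V →ₗ[ℝ] V} (hR : IsAlgCurvature R) (hCR : FirstCR (m := 0) χ R)
    (x y z : V) (n1 : ⟪x,x⟫=1) (n2 : ⟪y,y⟫=1) (n4 : ⟪z,z⟫=1)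
    (g12 : ⟪x,y⟫=0) (g41 : ⟪z,x⟫=0) (g42 : ⟪z,y⟫=0) (gze : ⟪z, cp χ x y⟫=0) :
    R x y (cp χ x y) = 0 ∧ R x y z = 0 := by
  obtain ⟨e, he⟩ : ∃ t : V, t = cp χ x y := ⟨_, rfl⟩
  obtain ⟨p, hp⟩ : ∃ t : V, t = cp χ x z := ⟨_, rfl⟩
  obtain ⟨q, hq⟩ : ∃ t : V, t = cp χ y z := ⟨_, rfl⟩
  obtain ⟨r, hr⟩ : ∃ t : V, t = cp χ e z := ⟨_, rfl⟩
  have g21 : ⟪y,x⟫ = 0 := by rw [real_inner_comm x y]; exact g12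
  have g14 : ⟪x,z⟫ = 0 := by rw [real_inner_comm z x]; exact g41
  have g24 : ⟪y,z⟫ = 0 := by rw [real_inner_comm z y]; exact g42
  have g43 : ⟪z,e⟫ = 0 := by rw [he]; exact gze
  have g34 : ⟪e,z⟫ = 0 := by rw [real_inner_comm z e]; exact g43
  have n3 : ⟪e,e⟫ = 1 := by rw [he, nrm' hχ x y, n1, n2, g12]; ring
  have g13 : ⟪x,e⟫ = 0 := by rw [he, real_inner_comm (cp χ x y) x]; exact orth1 hχ x y
  have g31 : ⟪e,x⟫ = 0 := by rw [real_inner_comm x e]; exact g13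
  have g23 : ⟪y,e⟫ = 0 := by rw [he, real_inner_comm (cp χ x y) y]; exact orth2 hχ x y
  have g32 : ⟪e,y⟫ = 0 := by rw [real_inner_comm y e]; exact g23
  have tab12 : cp χ x y = e := he.symm
  have tab14 : cp χ x z = p := hp.symm
  have tab24 : cp χ y z = q := hq.symm
  have tab34 : cp χ e z = r := hr.symm
  have tab21 : cp χ y x = -e := by rw [cp_anti χ y x, tab12]
  have tab41 : cp χ z x = -p := by rw [cp_anti χ z x, tab14]
  have tab42 : cp χ z y = -q := by rw [cp_anti χ z y, tab24]
  have tab43 : cp χ z e = -r := by rw [cp_anti χ z e, tab34]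
  have tab13 : cp χ x e = -y := by rw [he, I4 hχ x y, g12, n1]; module
  have tab31 : cp χ e x = y := by rw [cp_anti χ e x, tab13, neg_neg]
  have tab23 : cp χ y e = x := by
    rw [he, cp_anti χ x y, cp_neg_right, I4 hχ y x, g21, n2]; module
  have tab32 : cp χ e y = -x := by rw [cp_anti χ e y, tab23]
  have n5 : ⟪p,p⟫ = 1 := by rw [hp, nrm' hχ x z, n1, n4, g14]; ring
  have n6 : ⟪q,q⟫ = 1 := by rw [hq, nrm' hχ y z, n2, n4, g24]; ring
  have n7 : ⟪r,r⟫ = 1 := by rw [hr, nrm' hχ e z, n3, n4, g34]; ring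
  have g15 : ⟪x,p⟫ = 0 := by rw [hp, real_inner_comm (cp χ x z) x]; exact orth1 hχ x z
  have g51 : ⟪p,x⟫ = 0 := by rw [real_inner_comm x p]; exact g15
  have g45 : ⟪z,p⟫ = 0 := by rw [hp, real_inner_comm (cp χ x z) z]; exact orth2 hχ x z
  have g54 : ⟪p,z⟫ = 0 := by rw [real_inner_comm z p]; exact g45
  have g26 : ⟪y,q⟫ = 0 := by rw [hq, real_inner_comm (cp χ y z) y]; exact orth1 hχ y z
  have g62 : ⟪q,y⟫ = 0 := by rw [real_inner_comm y q]; exact g26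
  have g46 : ⟪z,q⟫ = 0 := by rw [hq, real_inner_comm (cp χ y z) z]; exact orth2 hχ y z
  have g64 : ⟪q,z⟫ = 0 := by rw [real_inner_comm z q]; exact g46
  have g37 : ⟪e,r⟫ = 0 := by rw [hr, real_inner_comm (cp χ e z) e]; exact orth1 hχ e z
  have g73 : ⟪r,e⟫ = 0 := by rw [real_inner_comm e r]; exact g37
  have g47 : ⟪z,r⟫ = 0 := by rw [hr, real_inner_comm (cp χ e z) z]; exact orth2 hχ e z
  have g74 : ⟪r,z⟫ = 0 := by rw [real_inner_comm z r]; exact g47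
  have g25 : ⟪y,p⟫ = 0 := by
    rw [hp, real_inner_comm (cp χ x z) y, adj hχ x z y, gze]; ring
  have g52 : ⟪p,y⟫ = 0 := by rw [real_inner_comm y p]; exact g25
  have g16 : ⟪x,q⟫ = 0 := by
    rw [hq, real_inner_comm (cp χ y z) x, adj hχ y z x, cp_anti χ y x, inner_neg_right, gze]
    ring
  have g61 : ⟪q,x⟫ = 0 := by rw [real_inner_comm x q]; exact g16
  have g17 : ⟪x,r⟫ = 0 := by
    rw [hr, real_inner_comm (cp χ e z) x, adj hχ e z x, tab31, g42]; ring
  have g71 : ⟪r,x⟫ = 0 := by rw [real_inner_comm x r]; exact g17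
  have g27 : ⟪y,r⟫ = 0 := by
    rw [hr, real_inner_comm (cp χ e z) y, adj hχ e z y, tab32, inner_neg_right, g41]; ring
  have g72 : ⟪r,y⟫ = 0 := by rw [real_inner_comm y r]; exact g27
  have g35 : ⟪e,p⟫ = 0 := by rw [he, hp, I2r hχ x y z, g24, g12]; ring
  have g53 : ⟪p,e⟫ = 0 := by rw [real_inner_comm e p]; exact g35
  have g36 : ⟪e,q⟫ = 0 := by
    rw [he, hq, cp_anti χ x y, inner_neg_left, I2r hχ y x z, g21, g14]; ring
  have g63 : ⟪q,e⟫ = 0 := by rw [real_inner_comm e q]; exact g36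
  have g56 : ⟪p,q⟫ = 0 := by rw [hp, hq, I2l hχ x y z, g12, g14]; ring
  have g65 : ⟪q,p⟫ = 0 := by rw [real_inner_comm p q]; exact g56
  have g57 : ⟪p,r⟫ = 0 := by rw [hp, hr, I2l hχ x e z, g13, g14]; ring
  have g75 : ⟪r,p⟫ = 0 := by rw [real_inner_comm p r]; exact g57
  have g67 : ⟪q,r⟫ = 0 := by rw [hq, hr, I2l hχ y e z, g23, g24]; ring
  have g76 : ⟪r,q⟫ = 0 := by rw [real_inner_comm q r]; exact g67
  have tab15 : cp χ x p = -z := by rw [hp, I4 hχ x z, g14, n1]; module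
  have tab51 : cp χ p x = z := by rw [cp_anti χ p x, tab15, neg_neg]
  have tab26 : cp χ y q = -z := by rw [hq, I4 hχ y z, g24, n2]; module
  have tab62 : cp χ q y = z := by rw [cp_anti χ q y, tab26, neg_neg]
  have tab37 : cp χ e r = -z := by rw [hr, I4 hχ e z, g34, n3]; module
  have tab73 : cp χ r e = z := by rw [cp_anti χ r e, tab37, neg_neg]
  have tab45 : cp χ z p = x := by
    rw [hp, cp_anti χ x z, cp_neg_right, I4 hχ z x, g41, n4]; module
  have tab54 : cp χ p z = -x := by rw [cp_anti χ p z, tab45]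
  have tab46 : cp χ z q = y := by
    rw [hq, cp_anti χ y z, cp_neg_right, I4 hχ z y, g42, n4]; module
  have tab64 : cp χ q z = -y := by rw [cp_anti χ q z, tab46]
  have tab47 : cp χ z r = e := by
    rw [hr, cp_anti χ e z, cp_neg_right, I4 hχ z e, g43, n4]; module
  have tab74 : cp χ r z = -e := by rw [cp_anti χ r z, tab47]
  have h36 := I5 hχ x q y
  rw [tab62, tab14, tab12, g12, g62, g16] at h36
  have tab63 : cp χ q e = -p := by linear_combination (norm := module) h36
  have tab36 : cp χ e q = p := by rw [cp_anti χ e q, tab63, neg_neg]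
  have h27 := I5 hχ e y z
  rw [tab24, tab34, tab36, g34, g24, g32] at h27
  have tab27 : cp χ y r = -p := by linear_combination (norm := module) h27
  have tab72 : cp χ r y = p := by rw [cp_anti χ r y, tab27, neg_neg]
  have h25 := I4 hχ y r
  rw [tab27, cp_neg_right, g27, n2] at h25
  have tab25 : cp χ y p = r := by linear_combination (norm := module) -h25
  have tab52 : cp χ p y = -r := by rw [cp_anti χ p y, tab25]
  have h16 := I5 hχ x y z
  rw [tab24, tab14, tab25, g14, g24, g12] at h16
  have tab16 : cp χ x q = -r := by linear_combination (norm := module) h16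
  have tab61 : cp χ q x = r := by rw [cp_anti χ q x, tab16, neg_neg]
  have h17 := I4 hχ x q
  rw [tab16, cp_neg_right, g16, n1] at h17
  have tab17 : cp χ x r = q := by linear_combination (norm := module) -h17
  have tab71 : cp χ r x = -q := by rw [cp_anti χ r x, tab17]
  have h35 := I5 hχ e x z
  rw [tab14, tab34, tab17, g34, g14, g31] at h35
  have tab35 : cp χ e p = -q := by linear_combination (norm := module) h35
  have tab53 : cp χ p e = q := by rw [cp_anti χ p e, tab35, neg_neg]
  have h56 := I5 hχ p y z
  rw [tab24, tab54, cp_neg_right, tab21, g54, g24, g52] at h56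
  have tab56 : cp χ p q = -e := by linear_combination (norm := module) h56
  have tab65 : cp χ q p = e := by rw [cp_anti χ q p, tab56, neg_neg]
  have h57 := I5 hχ p e z
  rw [tab34, tab54, cp_neg_right, tab31, g54, g34, g53] at h57
  have tab57 : cp χ p r = y := by linear_combination (norm := module) h57
  have tab75 : cp χ r p = -y := by rw [cp_anti χ r p, tab57]
  have h67 := I5 hχ q e z
  rw [tab34, tab64, cp_neg_right, tab32, g64, g34, g63] at h67
  have tab67 : cp χ q r = -x := by linear_combination (norm := module) h67
  have tab76 : cp χ r q = x := by rw [cp_anti χ r q, tab67, neg_neg]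
  have sA : ∀ a b c d : V, ⟪R a b c, d⟫ = -⟪R b a c, d⟫ := by
    intro a b c d
    rw [hR.1 a b]
    simp [LinearMap.neg_apply, inner_neg_left]
  have sK : ∀ a b c d : V, ⟪R a b c, d⟫ = -⟪R a b d, c⟫ := fun a b c d => hR.2.1 a b c d
  have sB : ∀ a b c d : V, ⟪R a b c, d⟫ + ⟪R b c a, d⟫ + ⟪R c a b, d⟫ = 0 := by
    intro a b c d
    have h := congrArg (fun t => (inner ℝ t d : ℝ)) (hR.2.2 a b c)
    simpa [inner_add_left] using h
  have sP : ∀ a b c d : V, ⟪R a b c, d⟫ = ⟪R c d a, b⟫ := by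
    intro a b c d
    linear_combination (sK a b c d - sB a c d b + sA a d c b - sK a d b c - sK b c a d
      + sB a b c d - sA a c b d + sK a c b d + sK b d a c - sB a b d c + sA a d b c
      - sK c d a b + sB b c d a - sA b d c a) / 2
  have stU : ∀ u v a b : V, ⟪v,v⟫ = 1 → ⟪a,v⟫ = 0 → ⟪b,v⟫ = 0 →
      ⟪R u v (cp χ v a), b⟫ + ⟪R u v a, cp χ v b⟫ = 0 :=
    fun u v a b h1 h2 h3 => starU hχ hR hCR u v a b h1 h2 h3
  have stP : ∀ u v₁ v₂ a b : V, ⟪v₁,v₁⟫=1 → ⟪v₂,v₂⟫=1 → ⟪v₁,v₂⟫=0 →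
      ⟪a,v₁⟫=0 → ⟪a,v₂⟫=0 → ⟪b,v₁⟫=0 → ⟪b,v₂⟫=0 →
      ⟪R u v₁ (cp χ v₂ a), b⟫ + ⟪R u v₁ a, cp χ v₂ b⟫
        + ⟪R u v₂ (cp χ v₁ a), b⟫ + ⟪R u v₂ a, cp χ v₁ b⟫ = 0 :=
    fun u v₁ v₂ a b h1 h2 h3 h4 h5 h6 h7' => starP hχ hR hCR u v₁ v₂ a b h1 h2 h3 h4 h5 h6 h7'

  have cert_3_1 : ⟪R x y e, x⟫ = 0 := by
    linear_combination -(stP y x z e p n1 n4 g14 g31 g34 g51 g54) + (criN R y x p tab43) + (croE R y x e tab45) + (criN R y z p tab13) + (croN R y z e tab15) + (sA x y e x) - ((3:ℝ)/2) * (sA x y z q) - ((3:ℝ)/2) * (stU q x y p n1 g21 g51) + ((3:ℝ)/2) * (criE R q x p tab12) + ((3:ℝ)/2) * (croN R q x y tab15) - ((3:ℝ)/2) * (sP x z y q) - ((3:ℝ)/2) * (sB x y q z) + ((3:ℝ)/2) * (sP x p e q) + ((3:ℝ)/2) * (sB x e q p) - (sA x p e q) + (stU p x y q n1 g21 g61)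 - (criE R p x q tab12) - (croN R p x y tab16) + ((3:ℝ)/2) * (sK x y z q) - ((3:ℝ)/2) * (stU e x z q n1 g41 g61) + ((3:ℝ)/2) * (criE R e x q tab14) + ((3:ℝ)/2) * (croN R e x z tab16) + ((3:ℝ)/2) * (sA x e p q) - ((3:ℝ)/2) * (sK x e p q) + (stU y p x y n5 g15 g25) - (criE R y p y tab51) - (croN R y p x tab52) - (sK y p y z) - (sP y z y p) + (sB x y p r) + ((3:ℝ)/2) * (stU z e x z n3 g13 g43) - ((3:ℝ)/2) * (criE R z e z tab31) - ((3:ℝ)/2) * (croE R z e x tab34) - ((3:ℝ)/2) * (sB x z e r) - ((3:ℝ)/2) * (sB y z e z) + ((3:ℝ)/2) * (sA y e z z) - ((3:ℝ)/4) * (sK y e z z) + ((3:ℝ)/2) * (sA x z y q) - ((3:ℝ)/2) * (stU z x y r n1 g21 g71) + ((3:ℝ)/2) * (criE R z x r tab12) + ((3:ℝ)/2) * (croE R z x y tab17) + ((3:ℝ)/2) * (sA x z e r) + (2:ℝ) * (stU y x z r n1 g41 g71) - (2:ℝ) * (criE R y x r tab14) - (2:ℝ) * (croE R y x z tab17) -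 (2:ℝ) * (sA x y p r) + ((1:ℝ)/2) * (stU q e x q n3 g13 g63) - ((1:ℝ)/2) * (criE R q e q tab31) - ((1:ℝ)/2) * (croE R q e x tab36) + ((1:ℝ)/2) * (sP x p q e) - ((1:ℝ)/2) * (sK x p e q) - ((1:ℝ)/2) * (sB y q e q) + ((1:ℝ)/2) * (sA y q e q) + ((1:ℝ)/2) * (sA y e q q) + ((1:ℝ)/2) * (stU q y x q n2 g12 g62) - ((1:ℝ)/2) * (criN R q y q tab21) - ((1:ℝ)/2) * (croN R q y x tab26) - ((1:ℝ)/2) * (sP x z q y) + ((1:ℝ)/2) * (sK x z y q) - ((1:ℝ)/4) * (sK y e q q) + (sK x y p r) + ((1:ℝ)/2) * (sA y z e z) + ((1:ℝ)/2) * (stU z y x z n2 g12 g42) - ((1:ℝ)/2) * (criN R z y z tab21) - ((1:ℝ)/2) * (croE R z y x tab24) - ((1:ℝ)/2) * (sB x z y q) - (sA x y r p)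
  have cert_3_2 : ⟪R x y e, y⟫ = 0 := by
    linear_combination (stP y x z y r n1 n4 g14 g21 g24 g71 g74) - (criN R y x r tab42) - (croE R y x y tab47) - (criE R y z r tab12) - (croE R y z y tab17) - (sA x y y e) + (2:ℝ) * (sA x y q r) + (sK x y y e) + ((1:ℝ)/2) * (sA y y z q) - (stP z x y e q n1 n2 g12 g31 g32 g61 g62) + (criE R z x q tab23) + (croN R z x e tab26) + (criN R z y q tab13) + (croN R z y e tab16) + (sB x x z q) - ((1:ℝ)/2) * (sA x x z q) - (sB y y z q) - ((3:ℝ)/2) * (sK x z y p) + (stU q y x p n2 g12 g52) - (criN R q y p tab21) - (croE R q y x tab25) - (sB x q y r) + (sP y p e q) + (sB y e q p) - ((3:ℝ)/2) * (sA y p e q) - ((3:ℝ)/2) * (stU p y x q n2 g12 g62) + ((3:ℝ)/2) * (criN R p y q tab21) + ((3:ℝ)/2) * (croN R p y x tab26) + ((3:ℝ)/2) * (sP x z p y) - ((3:ℝ)/2) * (sA y e q p) + ((3:ℝ)/2) * (stU e y z p n2 g42 g52) - ((3:ℝ)/2) * (criE R e y p tab24) - ((3:ℝ)/2) * (croE R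 e y z tab25) - (stU x q x y n6 g16 g26) + (criE R x q y tab61) + (croE R x q x tab62) - (sP x z x q) + (sK x q y r) + ((3:ℝ)/2) * (stU z e x r n3 g13 g73) - ((3:ℝ)/2) * (criE R z e r tab31) - ((3:ℝ)/2) * (croN R z e x tab37) + ((3:ℝ)/2) * (sB x z e z) - ((3:ℝ)/2) * (sA x z e z) - ((3:ℝ)/2) * (sA x e z z) - ((3:ℝ)/2) * (sB y z e r) + ((3:ℝ)/4) * (sK x e z z) + ((3:ℝ)/2) * (stU z y x r n2 g12 g72) - ((3:ℝ)/2) * (criN R z y r tab21) - ((3:ℝ)/2) * (croN R z y x tab27) + ((3:ℝ)/2) * (sB x z y p) - ((3:ℝ)/2) * (sA x y z p) - (2:ℝ) * (stU x y z r n2 g42 g72) + (2:ℝ) * (criE R x y r tab24) + (2:ℝ) * (croN R x y z tab27) - ((1:ℝ)/2) * (stU p e x q n3 g13 g63) + ((1:ℝ)/2) * (criE R p e q tab31) + ((1:ℝ)/2) * (croE R p e x tab36) + ((1:ℝ)/2) * (sB x p e p) - ((1:ℝ)/2) * (sA x p e p) - ((1:ℝ)/2) * (sA x e p p) + ((1:ℝ)/2)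 * (sB y p e q) - ((1:ℝ)/2) * (sA y e p q) + ((1:ℝ)/2) * (sK y e p q) - ((1:ℝ)/2) * (sK x y z p) + ((1:ℝ)/2) * (stU p x y p n1 g21 g51) - ((1:ℝ)/2) * (criE R p x p tab12) - ((1:ℝ)/2) * (croN R p x y tab15) + ((1:ℝ)/2) * (sP x z y p) + ((1:ℝ)/2) * (sB x y p z) + ((1:ℝ)/4) * (sK x e p p) + ((1:ℝ)/2) * (stU z x y z n1 g21 g41) - ((1:ℝ)/2) * (criE R z x z tab12) - ((1:ℝ)/2) * (croE R z x y tab14) - ((1:ℝ)/2) * (sA x z y p) + ((1:ℝ)/2) * (sA y z e r)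
  have cert_3_3 : ⟪R x y e, e⟫ = 0 := by
    linear_combination ((1:ℝ)/2) * (sK x y e e)
  have cert_3_4 : ⟪R x y e, z⟫ = 0 := by
    linear_combination ((1:ℝ)/2) * (stU e z x q n4 g14 g64) - ((1:ℝ)/2) * (criN R e z q tab41) - ((1:ℝ)/2) * (croE R e z x tab46) + ((1:ℝ)/2) * (sP x y e z) - ((1:ℝ)/2) * (stU q z x e n4 g14 g34) + ((1:ℝ)/2) * (criN R q z e tab41) + ((1:ℝ)/2) * (croN R q z x tab43) - ((1:ℝ)/2) * (sB x q z r) + ((1:ℝ)/2) * (sA x z q r) - ((1:ℝ)/2) * (sB z p q e) - ((1:ℝ)/2) * (sP z e p q) + ((1:ℝ)/2) * (sA e z p q) - ((1:ℝ)/2) * (stU x q x z n6 g16 g46) + ((1:ℝ)/2) * (criE R x q z tab61) + ((1:ℝ)/2) * (croN R x q x tab64) + ((1:ℝ)/2) * (sP x y x q) - ((1:ℝ)/2) * (stU x y x z n2 g12 g42) + ((1:ℝ)/2) * (criN R x y z tab21) + ((1:ℝ)/2) * (croE R x y x tab24) + ((1:ℝ)/2) * (sK x q z r) - ((1:ℝ)/2)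 * (stU y p x r n5 g15 g75) + ((1:ℝ)/2) * (criE R y p r tab51) + ((1:ℝ)/2) * (croE R y p x tab57) - ((1:ℝ)/2) * (sP x y y p) - ((1:ℝ)/2) * (stU y x y z n1 g21 g41) + ((1:ℝ)/2) * (criE R y x z tab12) + ((1:ℝ)/2) * (croE R y x y tab14) + ((1:ℝ)/2) * (sA x y y p) + ((1:ℝ)/2) * (sA x y e z) - ((1:ℝ)/2) * (stU y z x r n4 g14 g74) + ((1:ℝ)/2) * (criN R y z r tab41) + ((1:ℝ)/2) * (croE R y z x tab47) + ((1:ℝ)/2) * (stU x z y r n4 g24 g74) - ((1:ℝ)/2) * (criN R x z r tab42) - ((1:ℝ)/2) * (croE R x z y tab47) - ((1:ℝ)/2) * (sA x z y e) + ((1:ℝ)/2) * (sB x y z e) - ((1:ℝ)/2) * (sK x y e z) + ((1:ℝ)/2) * (stU p z y e n4 g24 g34) - ((1:ℝ)/2) * (criN R p z e tab42) - ((1:ℝ)/2) * (croN R p z y tab43) + ((1:ℝ)/2) * (sB y p z r) - ((1:ℝ)/2) * (sA y z p r) + ((1:ℝ)/2) * (sA z p q e)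
  have cert_3_5 : ⟪R x y e, p⟫ = 0 := by
    linear_combination ((1:ℝ)/2) * (stU x q x p n6 g16 g56) - ((1:ℝ)/2) * (criE R x q p tab61) - ((1:ℝ)/2) * (croE R x q x tab65) + ((1:ℝ)/2) * (sP x e x q) + ((1:ℝ)/2) * (stU x e x p n3 g13 g53) - ((1:ℝ)/2) * (criE R x e p tab31) - ((1:ℝ)/2) * (croN R x e x tab35) - ((1:ℝ)/2) * (sK x q p r) - ((1:ℝ)/2) * (sP x e y p) + ((1:ℝ)/2) * (stU x p y q n5 g25 g65) - ((1:ℝ)/2) * (criN R x p q tab52) - ((1:ℝ)/2) * (croN R x p y tab56) + ((1:ℝ)/2) * (sA x p y e) - ((1:ℝ)/2) * (sB x y p e) + ((1:ℝ)/2) * (sK x y e p) + ((1:ℝ)/2) * (stU r z x e n4 g14 g34) - ((1:ℝ)/2) * (criN R r z e tab41) - ((1:ℝ)/2) * (croN R r z x tab43) + ((1:ℝ)/2) * (sB x r z r) - ((1:ℝ)/2) * (sA x r z r) - ((1:ℝ)/2) * (sA x z r r) + ((1:ℝ)/2) * (sB z p r e) - ((1:ℝ)/2) * (sK z p e r) +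 ((1:ℝ)/2) * (sB e z p r) - ((1:ℝ)/2) * (sA e p z r) + ((1:ℝ)/2) * (sP z e p r) - ((1:ℝ)/2) * (sA e z p r) - ((1:ℝ)/2) * (stU r x z q n1 g41 g61) + ((1:ℝ)/2) * (criE R r x q tab14) + ((1:ℝ)/2) * (croN R r x z tab16) + ((1:ℝ)/4) * (sK x z r r) + ((1:ℝ)/2) * (sP x q p r) + ((1:ℝ)/2) * (sB x p r q) + ((1:ℝ)/2) * (stU e p x r n5 g15 g75) - ((1:ℝ)/2) * (criE R e p r tab51) - ((1:ℝ)/2) * (croE R e p x tab57) + ((1:ℝ)/2) * (sP x y e p)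
  have cert_3_6 : ⟪R x y e, q⟫ = 0 := by
    linear_combination ((1:ℝ)/2) * (stU y q x p n6 g16 g56) - ((1:ℝ)/2) * (criE R y q p tab61) - ((1:ℝ)/2) * (croE R y q x tab65) + ((1:ℝ)/2) * (sP x e y q) + ((1:ℝ)/2) * (stU r z y e n4 g24 g34) - ((1:ℝ)/2) * (criN R r z e tab42) - ((1:ℝ)/2) * (croN R r z y tab43) + ((1:ℝ)/2) * (sB y r z r) - ((1:ℝ)/2) * (sA y r z r) - ((1:ℝ)/2) * (sA y z r r) + ((1:ℝ)/2) * (sB z q r e) - ((1:ℝ)/2) * (sK z q e r) + ((1:ℝ)/2) * (sB e z q r) - ((1:ℝ)/2) * (sA e q z r) + ((1:ℝ)/2) * (sP z e q r) - ((1:ℝ)/2) * (sA e z q r) + ((1:ℝ)/2) * (stU r y z p n2 g42 g52) - ((1:ℝ)/2) * (criE R r y p tab24) - ((1:ℝ)/2) * (croE R r y z tab25) + ((1:ℝ)/4) * (sK y z r r) - ((1:ℝ)/2) * (sB y q r p) + ((1:ℝ)/2) * (sK y p q r) - ((1:ℝ)/2) * (sP y p q r) - ((1:ℝ)/2) * (stU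 e q x z n6 g16 g46) + ((1:ℝ)/2) * (criE R e q z tab61) + ((1:ℝ)/2) * (croN R e q x tab64) + ((1:ℝ)/2) * (sP x y e q) + ((1:ℝ)/2) * (sK e q z r) + ((1:ℝ)/2) * (stU y p y q n5 g25 g65) - ((1:ℝ)/2) * (criN R y p q tab52) - ((1:ℝ)/2) * (croN R y p y tab56) - ((1:ℝ)/2) * (sP y e y p) + ((1:ℝ)/2) * (stU y e x p n3 g13 g53) - ((1:ℝ)/2) * (criE R y e p tab31) - ((1:ℝ)/2) * (croN R y e x tab35) + ((1:ℝ)/2) * (sB x y e q) - ((1:ℝ)/2) * (sA x e y q)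
  have cert_3_7 : ⟪R x y e, r⟫ = 0 := by
    linear_combination ((1:ℝ)/2) * (stU y q x z n6 g16 g46) - ((1:ℝ)/2) * (criE R y q z tab61) - ((1:ℝ)/2) * (croN R y q x tab64) - ((1:ℝ)/2) * (sP x y y q) - ((1:ℝ)/2) * (stU y x y r n1 g21 g71) + ((1:ℝ)/2) * (criE R y x r tab12) + ((1:ℝ)/2) * (croE R y x y tab17) + ((1:ℝ)/2) * (sA x y y q) + (sA x y e r) - ((1:ℝ)/2) * (sA y z q r) - ((1:ℝ)/2) * (sK y q z r) + ((1:ℝ)/2) * (stU q z y e n4 g24 g34) - ((1:ℝ)/2) * (criN R q z e tab42) - ((1:ℝ)/2) * (croN R q z y tab43) + ((1:ℝ)/2) * (sB y q z r) + ((1:ℝ)/2) * (stU q e z p n3 g43 g53) - ((1:ℝ)/2) * (criE R q e p tab34) - ((1:ℝ)/2) * (croN R q e z tab35) - ((1:ℝ)/4) * (sK e z q q) - ((1:ℝ)/2) * (sA e q r p) + ((1:ℝ)/2) * (sA z q q e) - ((1:ℝ)/2) * (sK z q e q) + ((1:ℝ)/2) * (sB e z q q) + ((1:ℝ)/2) *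 (stU e q x p n6 g16 g56) - ((1:ℝ)/2) * (criE R e q p tab61) - ((1:ℝ)/2) * (croE R e q x tab65) + ((1:ℝ)/2) * (sP x e e q) + ((1:ℝ)/2) * (stU e x y q n1 g21 g61) - ((1:ℝ)/2) * (criE R e x q tab12) - ((1:ℝ)/2) * (croN R e x y tab16) - ((1:ℝ)/2) * (sA x e e q) - ((1:ℝ)/2) * (stU y z y r n4 g24 g74) + ((1:ℝ)/2) * (criN R y z r tab42) + ((1:ℝ)/2) * (croE R y z y tab47) - ((1:ℝ)/2) * (sP y e y z) + ((1:ℝ)/2) * (stU y e x z n3 g13 g43) - ((1:ℝ)/2) * (criE R y e z tab31) - ((1:ℝ)/2) * (croE R y e x tab34) - ((1:ℝ)/2) * (sB x y e r) - ((1:ℝ)/2) * (stU x p x r n5 g15 g75) + ((1:ℝ)/2) * (criE R x p r tab51) + ((1:ℝ)/2) * (croE R x p x tab57) - ((1:ℝ)/2) * (sP x y x p) - ((1:ℝ)/2) * (stU x y x r n2 g12 g72) + ((1:ℝ)/2) * (criN R x y r tab21) + ((1:ℝ)/2) * (croN R x y x tab27) - ((1:ℝ)/2) * (stU x z x r n4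 g14 g74) + ((1:ℝ)/2) * (criN R x z r tab41) + ((1:ℝ)/2) * (croE R x z x tab47) - ((1:ℝ)/2) * (sP x e x z) - ((1:ℝ)/2) * (stU x e x r n3 g13 g73) + ((1:ℝ)/2) * (criE R x e r tab31) + ((1:ℝ)/2) * (croN R x e x tab37) + (sA x e y r) - ((1:ℝ)/2) * (sA x z p r) + ((1:ℝ)/2) * (stU p z x e n4 g14 g34) - ((1:ℝ)/2) * (criN R p z e tab41) - ((1:ℝ)/2) * (croN R p z x tab43) + ((1:ℝ)/2) * (sB x p z r) - ((1:ℝ)/2) * (stU p e z q n3 g43 g63) + ((1:ℝ)/2) * (criE R p e q tab34) + ((1:ℝ)/2) * (croE R p e z tab36) - ((1:ℝ)/4) * (sK e z p p) + ((1:ℝ)/2) * (sA z p p e) - ((1:ℝ)/2) * (sK z p e p) + ((1:ℝ)/2) * (sB e z p p) + ((1:ℝ)/2) * (stU e p y q n5 g25 g65) - ((1:ℝ)/2) * (criN R e p q tab52) - ((1:ℝ)/2) * (croN R e p y tab56) - ((1:ℝ)/2) * (sP y e e p) + ((1:ℝ)/2) * (stU e y x p n2 g12 g52) - ((1:ℝ)/2)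 * (criN R e y p tab21) - ((1:ℝ)/2) * (croE R e y x tab25) - ((1:ℝ)/2) * (sB x e y r) + ((1:ℝ)/2) * (sA y e e p) + ((1:ℝ)/2) * (sA e p r q)
  have cert_4_1 : ⟪R x y z, x⟫ = 0 := by
    linear_combination (sK x y x z) + ((1:ℝ)/2) * (stU y q x p n6 g16 g56) - ((1:ℝ)/2) * (criE R y q p tab61) - ((1:ℝ)/2) * (croE R y q x tab65) + ((1:ℝ)/2) * (sP x e y q) + (stU x y x q n2 g12 g62) - (criN R x y q tab21) - (croN R x y x tab26) + ((1:ℝ)/2) * (stU r z y e n4 g24 g34) - ((1:ℝ)/2) * (criN R r z e tab42) - ((1:ℝ)/2) * (croN R r z y tab43) + ((1:ℝ)/2) * (sB y r z r) - ((1:ℝ)/2) * (sA y r z r) - ((1:ℝ)/2) * (sA y z r r) + ((1:ℝ)/2) * (sB z q r e) - ((1:ℝ)/2) * (sK z q e r) + ((1:ℝ)/2) * (sB e z q r) - ((1:ℝ)/2) * (sA e q z r) + ((1:ℝ)/2) * (sP z e q r) - ((1:ℝ)/2) * (sA e z q r) + ((1:ℝ)/2) * (stU r y z p n2 g42 g52)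 - ((1:ℝ)/2) * (criE R r y p tab24) - ((1:ℝ)/2) * (croE R r y z tab25) + ((1:ℝ)/4) * (sK y z r r) - ((1:ℝ)/2) * (sB y q r p) + ((1:ℝ)/2) * (sK y p q r) - ((1:ℝ)/2) * (sP y p q r) - ((1:ℝ)/2) * (stU e q x z n6 g16 g46) + ((1:ℝ)/2) * (criE R e q z tab61) + ((1:ℝ)/2) * (croN R e q x tab64) + ((1:ℝ)/2) * (sP x y e q) + ((1:ℝ)/2) * (sK e q z r) + ((1:ℝ)/2) * (stU y p y q n5 g25 g65) - ((1:ℝ)/2) * (criN R y p q tab52) - ((1:ℝ)/2) * (croN R y p y tab56) - ((1:ℝ)/2) * (sP y e y p) + ((1:ℝ)/2) * (stU y e x p n3 g13 g53) - ((1:ℝ)/2) * (criE R y e p tab31) - ((1:ℝ)/2) * (croN R y e x tab35) + ((1:ℝ)/2) * (sB x y e q) - ((1:ℝ)/2) * (sA x e y q)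
  have cert_4_2 : ⟪R x y z, y⟫ = 0 := by
    linear_combination (sK x y y z) - ((1:ℝ)/2) * (stU x q x p n6 g16 g56) + ((1:ℝ)/2) * (criE R x q p tab61) + ((1:ℝ)/2) * (croE R x q x tab65) - ((1:ℝ)/2) * (sP x e x q) - ((1:ℝ)/2) * (stU x e x p n3 g13 g53) + ((1:ℝ)/2) * (criE R x e p tab31) + ((1:ℝ)/2) * (croN R x e x tab35) + ((1:ℝ)/2) * (sK x q p r) + ((1:ℝ)/2) * (sP x e y p) - ((1:ℝ)/2) * (stU x p y q n5 g25 g65) + ((1:ℝ)/2) * (criN R x p q tab52) + ((1:ℝ)/2) * (croN R x p y tab56) - ((1:ℝ)/2) * (sA x p y e) + ((1:ℝ)/2) * (sB x y p e) + (sA x y e p) - ((1:ℝ)/2) * (sK x y e p) - (stU y x y p n1 g21 g51) + (criE R y x p tab12) + (croN R y x y tab15) - (sA x y y z) - ((1:ℝ)/2) * (stU r z x e n4 g14 g34) + ((1:ℝ)/2) * (criN R r z e tab41) + ((1:ℝ)/2) * (croN R r z x tab43) - ((1:ℝ)/2) * (sB x r z r) + ((1:ℝ)/2) * (sA x r z r)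 + ((1:ℝ)/2) * (sA x z r r) - ((1:ℝ)/2) * (sB z p r e) + ((1:ℝ)/2) * (sK z p e r) - ((1:ℝ)/2) * (sB e z p r) + ((1:ℝ)/2) * (sA e p z r) - ((1:ℝ)/2) * (sP z e p r) + ((1:ℝ)/2) * (sA e z p r) + ((1:ℝ)/2) * (stU r x z q n1 g41 g61) - ((1:ℝ)/2) * (criE R r x q tab14) - ((1:ℝ)/2) * (croN R r x z tab16) - ((1:ℝ)/4) * (sK x z r r) - ((1:ℝ)/2) * (sP x q p r) - ((1:ℝ)/2) * (sB x p r q) - ((1:ℝ)/2) * (stU e p x r n5 g15 g75) + ((1:ℝ)/2) * (criE R e p r tab51) + ((1:ℝ)/2) * (croE R e p x tab57) - ((1:ℝ)/2) * (sP x y e p)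
  have cert_4_3 : ⟪R x y z, e⟫ = 0 := by
    linear_combination -((1:ℝ)/2) * (stU e z x q n4 g14 g64) + ((1:ℝ)/2) * (criN R e z q tab41) + ((1:ℝ)/2) * (croE R e z x tab46) - ((1:ℝ)/2) * (sP x y e z) + ((3:ℝ)/2) * (sK x y e z) + ((1:ℝ)/2) * (stU q z x e n4 g14 g34) - ((1:ℝ)/2) * (criN R q z e tab41) - ((1:ℝ)/2) * (croN R q z x tab43) + ((1:ℝ)/2) * (sB x q z r) - ((1:ℝ)/2) * (sA x z q r) + ((1:ℝ)/2) * (sB z p q e) + ((1:ℝ)/2) * (sP z e p q) - ((1:ℝ)/2) * (sA e z p q) + ((1:ℝ)/2) * (stU x q x z n6 g16 g46) - ((1:ℝ)/2) * (criE R x q z tab61) - ((1:ℝ)/2) * (croN R x q x tab64) - ((1:ℝ)/2) * (sP x y x q) + ((1:ℝ)/2) * (stU x y x z n2 g12 g42) - ((1:ℝ)/2) * (criN R x y z tab21) - ((1:ℝ)/2) * (croE R x y x tab24) - ((1:ℝ)/2) * (sK x q z r) + ((1:ℝ)/2) * (stU y p x r n5 g15 g75) - ((1:ℝ)/2) * (criE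 R y p r tab51) - ((1:ℝ)/2) * (croE R y p x tab57) + ((1:ℝ)/2) * (sP x y y p) + ((1:ℝ)/2) * (stU y x y z n1 g21 g41) - ((1:ℝ)/2) * (criE R y x z tab12) - ((1:ℝ)/2) * (croE R y x y tab14) - ((1:ℝ)/2) * (sA x y y p) - ((1:ℝ)/2) * (sA x y e z) + ((1:ℝ)/2) * (stU y z x r n4 g14 g74) - ((1:ℝ)/2) * (criN R y z r tab41) - ((1:ℝ)/2) * (croE R y z x tab47) - ((1:ℝ)/2) * (stU x z y r n4 g24 g74) + ((1:ℝ)/2) * (criN R x z r tab42) + ((1:ℝ)/2) * (croE R x z y tab47) + ((1:ℝ)/2) * (sA x z y e) - ((1:ℝ)/2) * (sB x y z e) - ((1:ℝ)/2) * (stU p z y e n4 g24 g34) + ((1:ℝ)/2) * (criN R p z e tab42) + ((1:ℝ)/2) * (croN R p z y tab43) - ((1:ℝ)/2) * (sB y p z r) + ((1:ℝ)/2) * (sA y z p r) - ((1:ℝ)/2) * (sA z p q e)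
  have cert_4_4 : ⟪R x y z, z⟫ = 0 := by
    linear_combination ((1:ℝ)/2) * (sK x y z z)
  have cert_4_5 : ⟪R x y z, p⟫ = 0 := by
    linear_combination ((1:ℝ)/2) * (stU p e x q n3 g13 g63) - ((1:ℝ)/2) * (criE R p e q tab31) - ((1:ℝ)/2) * (croE R p e x tab36) - ((1:ℝ)/2) * (sB x p e p) + ((1:ℝ)/2) * (sA x p e p) + ((1:ℝ)/2) * (sA x e p p) - ((1:ℝ)/2) * (sB y p e q) + ((1:ℝ)/2) * (sA y e p q) - ((1:ℝ)/2) * (sK y e p q) + ((1:ℝ)/2) * (sK x y z p) - ((1:ℝ)/2) * (stU p x y p n1 g21 g51) + ((1:ℝ)/2) * (criE R p x p tab12) + ((1:ℝ)/2) * (croN R p x y tab15) - ((1:ℝ)/2) * (sP x z y p) - ((1:ℝ)/2) * (sB x y p z) - ((1:ℝ)/4) * (sK x e p p) + ((1:ℝ)/2) * (sA y p e q) + ((1:ℝ)/2) * (stU p y x q n2 g12 g62) - ((1:ℝ)/2) * (criN R p y q tab21) - ((1:ℝ)/2) * (croN R p y x tab26) - ((1:ℝ)/2) * (sP x z p y)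 + ((1:ℝ)/2) * (sK x z y p) + ((1:ℝ)/2) * (sA y e q p) - ((1:ℝ)/2) * (stU e y z p n2 g42 g52) + ((1:ℝ)/2) * (criE R e y p tab24) + ((1:ℝ)/2) * (croE R e y z tab25) - ((1:ℝ)/2) * (stU z e x r n3 g13 g73) + ((1:ℝ)/2) * (criE R z e r tab31) + ((1:ℝ)/2) * (croN R z e x tab37) - ((1:ℝ)/2) * (sB x z e z) + ((1:ℝ)/2) * (sA x z e z) + ((1:ℝ)/2) * (sA x e z z) + ((1:ℝ)/2) * (sB y z e r) - ((1:ℝ)/2) * (stU z x y z n1 g21 g41) + ((1:ℝ)/2) * (criE R z x z tab12) + ((1:ℝ)/2) * (croE R z x y tab14) - ((1:ℝ)/4) * (sK x e z z) + ((1:ℝ)/2) * (sA x z y p) - ((1:ℝ)/2) * (stU z y x r n2 g12 g72) + ((1:ℝ)/2) * (criN R z y r tab21) + ((1:ℝ)/2) * (croN R z y x tab27) - ((1:ℝ)/2) * (sB x z y p) + ((1:ℝ)/2) * (sA x y z p) - ((1:ℝ)/2) * (sA y z e r)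
  have cert_4_6 : ⟪R x y z, q⟫ = 0 := by
    linear_combination ((1:ℝ)/2) * (sA x y z q) + ((1:ℝ)/2) * (stU q e x q n3 g13 g63) - ((1:ℝ)/2) * (criE R q e q tab31) - ((1:ℝ)/2) * (croE R q e x tab36) + ((1:ℝ)/2) * (sP x p q e) - ((1:ℝ)/2) * (sK x p e q) - ((1:ℝ)/2) * (sB y q e q) + ((1:ℝ)/2) * (sA y q e q) + ((1:ℝ)/2) * (sA y e q q) + ((1:ℝ)/2) * (stU q y x q n2 g12 g62) - ((1:ℝ)/2) * (criN R q y q tab21) - ((1:ℝ)/2) * (croN R q y x tab26) - ((1:ℝ)/2) * (sP x z q y) + ((1:ℝ)/2) * (sK x z y q) - ((1:ℝ)/4) * (sK y e q q) - ((1:ℝ)/2) * (stU q x y p n1 g21 g51) + ((1:ℝ)/2) * (criE R q x p tab12) + ((1:ℝ)/2) * (croN R q x y tab15) - ((1:ℝ)/2) * (sP x z y q) - ((1:ℝ)/2) * (sB x y q z) + ((1:ℝ)/2) * (sP x p e q) + ((1:ℝ)/2) * (sB x e q p) + ((1:ℝ)/2) * (sK x y z q) - ((1:ℝ)/2) * (stU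 e x z q n1 g41 g61) + ((1:ℝ)/2) * (criE R e x q tab14) + ((1:ℝ)/2) * (croN R e x z tab16) + ((1:ℝ)/2) * (sA x e p q) - ((1:ℝ)/2) * (sK x e p q) + ((1:ℝ)/2) * (stU z e x z n3 g13 g43) - ((1:ℝ)/2) * (criE R z e z tab31) - ((1:ℝ)/2) * (croE R z e x tab34) - ((1:ℝ)/2) * (sB x z e r) - ((1:ℝ)/2) * (sB y z e z) + ((1:ℝ)/2) * (sA y z e z) + ((1:ℝ)/2) * (sA y e z z) + ((1:ℝ)/2) * (stU z y x z n2 g12 g42) - ((1:ℝ)/2) * (criN R z y z tab21) - ((1:ℝ)/2) * (croE R z y x tab24) - ((1:ℝ)/2) * (sB x z y q) - ((1:ℝ)/4) * (sK y e z z) + ((1:ℝ)/2) * (sA x z y q) - ((1:ℝ)/2) * (stU z x y r n1 g21 g71) + ((1:ℝ)/2) * (criE R z x r tab12) + ((1:ℝ)/2) * (croE R z x y tab17) + ((1:ℝ)/2) * (sA x z e r)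
  have cert_4_7 : ⟪R x y z, r⟫ = 0 := by
    linear_combination (sA x y z r) + ((1:ℝ)/2) * (stU e y z r n2 g42 g72) - ((1:ℝ)/2) * (criE R e y r tab24) - ((1:ℝ)/2) * (croN R e y z tab27) + ((1:ℝ)/2) * (stU q e x r n3 g13 g73) - ((1:ℝ)/2) * (criE R q e r tab31) - ((1:ℝ)/2) * (croN R q e x tab37) - ((1:ℝ)/2) * (sP x z q e) + ((1:ℝ)/2) * (sK x z e q) - ((1:ℝ)/2) * (sB y q e r) + ((1:ℝ)/2) * (stU q x y z n1 g21 g41) - ((1:ℝ)/2) * (criE R q x z tab12) - ((1:ℝ)/2) * (croE R q x y tab14) - ((1:ℝ)/2) * (sP x p y q) - ((1:ℝ)/2) * (sB x y q p) - ((1:ℝ)/2) * (sP x z e q) - ((1:ℝ)/2) * (sB x e q z) - ((1:ℝ)/2) * (sA x e z q) + ((1:ℝ)/2) * (sK x e z q) - ((1:ℝ)/2) * (sA x y p q) + ((1:ℝ)/2) * (sK x y p q) + ((1:ℝ)/2) * (sA y q e r) + ((1:ℝ)/2) * (stU q y x r n2 g12 g72) - ((1:ℝ)/2) * (criN R q y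 r tab21) - ((1:ℝ)/2) * (croN R q y x tab27) - ((1:ℝ)/2) * (sP x p q y) + ((1:ℝ)/2) * (sK x p y q) + (stU y x z q n1 g41 g61) - (criE R y x q tab14) - (croN R y x z tab16) + ((1:ℝ)/2) * (stU p e x z n3 g13 g43) - ((1:ℝ)/2) * (criE R p e z tab31) - ((1:ℝ)/2) * (croE R p e x tab34) - ((1:ℝ)/2) * (sB x p e r) + ((1:ℝ)/2) * (sP y z p e) - ((1:ℝ)/2) * (sK y z e p) + ((1:ℝ)/2) * (sA x p y q) - ((1:ℝ)/2) * (stU p x y r n1 g21 g71) + ((1:ℝ)/2) * (criE R p x r tab12) + ((1:ℝ)/2) * (croE R p x y tab17) + ((1:ℝ)/2) * (sA x p e r) + ((1:ℝ)/2) * (stU p y x z n2 g12 g42) - ((1:ℝ)/2) * (criN R p y z tab21) - ((1:ℝ)/2) * (croE R p y x tab24) - ((1:ℝ)/2) * (sB x p y q) + ((1:ℝ)/2) * (sP y z e p) + ((1:ℝ)/2) * (sB y e p z) + ((1:ℝ)/2) * (sA y e z p) - ((1:ℝ)/2) * (sK y e z p) + ((1:ℝ)/2) * (stU e x z r n1 g41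 g71) - ((1:ℝ)/2) * (criE R e x r tab14) - ((1:ℝ)/2) * (croE R e x z tab17)
  have hzero : ∀ v : V, ⟪v,x⟫ = 0 → ⟪v,y⟫ = 0 → ⟪v,e⟫ = 0 → ⟪v,z⟫ = 0 →
      ⟪v,p⟫ = 0 → ⟪v,q⟫ = 0 → ⟪v,r⟫ = 0 → v = 0 := by
    intro v hc1 hc2 hc3 hc4 hc5 hc6 hc7
    have hON : Orthonormal ℝ (![x,y,e,z,p,q,r] : Fin 7 → V) := by
      rw [orthonormal_iff_ite]
      intro i j
      fin_cases i <;> fin_cases j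
      · simpa using n1
      · simpa using g12
      · simpa using g13
      · simpa using g14
      · simpa using g15
      · simpa using g16
      · simpa using g17
      · simpa using g21
      · simpa using n2
      · simpa using g23
      · simpa using g24
      · simpa using g25
      · simpa using g26
      · simpa using g27
      · simpa using g31
      · simpa using g32
      · simpa using n3
      · simpa using g34
      · simpa using g35
      · simpa using g36
      · simpa using g37
      · simpa using g41
      · simpa using g42
      · simpa using g43
      · simpa using n4
      · simpa using g45
      · simpa using g46
      · simpa using g47
      · simpa using g51
      · simpa using g52
      · simpa using g53
      · simpa using g54
      · simpa using n5
      · simpa using g56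
      · simpa using g57
      · simpa using g61
      · simpa using g62
      · simpa using g63
      · simpa using g64
      · simpa using g65
      · simpa using n6
      · simpa using g67
      · simpa using g71
      · simpa using g72
      · simpa using g73
      · simpa using g74
      · simpa using g75
      · simpa using g76
      · simpa using n7
    have hsp : Submodule.span ℝ (Set.range (![x,y,e,z,p,q,r] : Fin 7 → V)) = ⊤ :=
      hON.linearIndependent.span_eq_top_of_card_eq_finrank (by simp [h7])
    have hall : ∀ u ∈ Submodule.span ℝ (Set.range (![x,y,e,z,p,q,r] : Fin 7 → V)),
        ⟪u, v⟫ = 0 := by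
      intro u hu
      induction hu using Submodule.span_induction with
      | mem w hw =>
          obtain ⟨i, rfl⟩ := hw
          fin_cases i
          · show ⟪x, v⟫ = 0; rw [real_inner_comm v x]; exact hc1
          · show ⟪y, v⟫ = 0; rw [real_inner_comm v y]; exact hc2
          · show ⟪e, v⟫ = 0; rw [real_inner_comm v e]; exact hc3
          · show ⟪z, v⟫ = 0; rw [real_inner_comm v z]; exact hc4
          · show ⟪p, v⟫ = 0; rw [real_inner_comm v p]; exact hc5
          · show ⟪q, v⟫ = 0; rw [real_inner_comm v q]; exact hc6
          · show ⟪r, v⟫ = 0; rw [real_inner_comm v r]; exact hc7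
      | zero => simp
      | add u1 u2 _ _ ha hb => rw [inner_add_left, ha, hb]; ring
      | smul t u1 _ ha => rw [real_inner_smul_left, ha]; ring
    have hvv := hall v (by rw [hsp]; trivial)
    exact inner_self_eq_zero.1 hvv
  constructor
  · rw [← he]
    exact hzero _ cert_3_1 cert_3_2 cert_3_3 cert_3_4 cert_3_5 cert_3_6 cert_3_7
  · exact hzero _ cert_4_1 cert_4_2 cert_4_3 cert_4_4 cert_4_5 cert_4_6 cert_4_7

/-- On a 7-dimensional real inner product space with a 2-fold VCP `χ`, an algebraic
curvature operator satisfying the first CR-integrability condition kills every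
vector orthogonal to its two arguments, and maps `span{x,y}` into itself. -/
theorem dim7_firstCR_curvature_in_so_E {V : Type*} [NormedAddCommGroup V]
    [InnerProductSpace ℝ V] [FiniteDimensional ℝ V] (h7 : Module.finrank ℝ V = 7)
    (χ : AlternatingMap ℝ V V (Fin 2)) (hχ : IsVCP χ)
    (R : V →ₗ[ℝ] V →ₗ[ℝ] V →ₗ[ℝ] V) (hR : IsAlgCurvature R)
    (hCR : FirstCR (m := 0) χ R) :
    (∀ x y z : V, ⟪z, x⟫ = 0 → ⟪z, y⟫ = 0 → R x y z = 0) ∧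
    (∀ x y : V, ∀ w ∈ Submodule.span ℝ ({x, y} : Set V),
      R x y w ∈ Submodule.span ℝ ({x, y} : Set V)) := by
  classical
  have hRxx : ∀ x : V, R x x = 0 := fun x => RvvL hR x
  have step : ∀ x y : V, ⟪x,x⟫=1 → ⟪y,y⟫=1 → ⟪x,y⟫=0 →
      ∀ z : V, ⟪z,x⟫=0 → ⟪z,y⟫=0 → R x y z = 0 := by
    intro x y nx ny gxy z hzx hzy
    obtain ⟨e, he⟩ : ∃ t : V, t = cp χ x y := ⟨_, rfl⟩
    have hex : ⟪e,x⟫ = 0 := by rw [he]; exact orth1 hχ x y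
    have hey : ⟪e,y⟫ = 0 := by rw [he]; exact orth2 hχ x y
    have hee : ⟪e,e⟫ = 1 := by rw [he, nrm' hχ x y, nx, ny, gxy]; ring
    obtain ⟨w, hww, hwx, hwy, hwe⟩ :
        ∃ w : V, ⟪w,w⟫=1 ∧ ⟪w,x⟫=0 ∧ ⟪w,y⟫=0 ∧ ⟪w,e⟫=0 := by
      have hKbot : (Submodule.span ℝ ({x, y, e} : Set V))ᗮ ≠ ⊥ := by
        intro hbot
        have hadd := Submodule.finrank_add_finrank_orthogonal
          (K := Submodule.span ℝ ({x,y,e} : Set V))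
        rw [hbot] at hadd
        have hle : Module.finrank ℝ (Submodule.span ℝ ({x,y,e} : Set V)) ≤ 3 := by
          have hset : ({x,y,e} : Set V) = (↑({x,y,e} : Finset V) : Set V) := by simp
          rw [hset]
          refine le_trans (finrank_span_finset_le_card _) ?_
          calc ({x,y,e} : Finset V).card ≤ ({y,e} : Finset V).card + 1 :=
                Finset.card_insert_le _ _
            _ ≤ (({e} : Finset V).card + 1) + 1 := by
                have := Finset.card_insert_le y ({e} : Finset V); omega
            _ ≤ 3 := by simp
        rw [h7] at hadd
        simp [finrank_bot] at hadd
        omega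
      obtain ⟨w0, hw0mem, hw0⟩ := Submodule.exists_mem_ne_zero_of_ne_bot hKbot
      have hw0x : ⟪w0, x⟫ = 0 :=
        Submodule.inner_left_of_mem_orthogonal (Submodule.subset_span (by simp)) hw0mem
      have hw0y : ⟪w0, y⟫ = 0 :=
        Submodule.inner_left_of_mem_orthogonal (Submodule.subset_span (by simp)) hw0mem
      have hw0e : ⟪w0, e⟫ = 0 :=
        Submodule.inner_left_of_mem_orthogonal (Submodule.subset_span (by simp)) hw0mem
      have hn : ‖w0‖ ≠ 0 := norm_ne_zero_iff.2 hw0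
      refine ⟨‖w0‖⁻¹ • w0, ?_, ?_, ?_, ?_⟩
      · rw [real_inner_smul_left, real_inner_smul_right, real_inner_self_eq_norm_mul_norm]
        field_simp
      · rw [real_inner_smul_left, hw0x]; ring
      · rw [real_inner_smul_left, hw0y]; ring
      · rw [real_inner_smul_left, hw0e]; ring
    have hcore := coreLemma h7 hχ hR hCR x y w nx ny hww gxy hwx hwy
      (by rw [← he]; exact hwe)
    have hRe : R x y e = 0 := by rw [he]; exact hcore.1
    obtain ⟨z1, hz1d⟩ : ∃ t : V, t = z - ⟪z,e⟫ • e := ⟨_, rfl⟩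
    have hz1x : ⟪z1,x⟫ = 0 := by
      rw [hz1d, inner_sub_left, real_inner_smul_left, hex, hzx]; ring
    have hz1y : ⟪z1,y⟫ = 0 := by
      rw [hz1d, inner_sub_left, real_inner_smul_left, hey, hzy]; ring
    have hz1e : ⟪z1,e⟫ = 0 := by
      rw [hz1d, inner_sub_left, real_inner_smul_left, hee]; ring
    have hRz1 : R x y z1 = 0 := by
      by_cases h0 : z1 = 0
      · rw [h0, map_zero]
      · have hn := norm_ne_zero_iff.2 h0
        have hcore2 := coreLemma h7 hχ hR hCR x y (‖z1‖⁻¹ • z1) nx ny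
          (by rw [real_inner_smul_left, real_inner_smul_right,
                real_inner_self_eq_norm_mul_norm]; field_simp)
          gxy
          (by rw [real_inner_smul_left, hz1x]; ring)
          (by rw [real_inner_smul_left, hz1y]; ring)
          (by rw [real_inner_smul_left, ← he, hz1e]; ring)
        have h2 := hcore2.2
        have hsm : R x y z1 = ‖z1‖ • R x y (‖z1‖⁻¹ • z1) := by
          rw [map_smul, smul_smul, mul_inv_cancel₀ hn, one_smul]
        rw [hsm, h2, smul_zero]
    have hdec : z = ⟪z,e⟫ • e + z1 := by rw [hz1d]; abel
    rw [hdec, map_add, map_smul, hRe, hRz1]; simp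
  have part1 : ∀ x y z : V, ⟪z,x⟫ = 0 → ⟪z,y⟫ = 0 → R x y z = 0 := by
    intro x y z hzx hzy
    by_cases hx0 : x = 0
    · rw [hx0]; simp
    have hnx := norm_ne_zero_iff.2 hx0
    obtain ⟨x1, hx1⟩ : ∃ t : V, t = ‖x‖⁻¹ • x := ⟨_, rfl⟩
    have nx1 : ⟪x1,x1⟫ = 1 := by
      rw [hx1, real_inner_smul_left, real_inner_smul_right, real_inner_self_eq_norm_mul_norm]
      field_simp
    have hzx1 : ⟪z,x1⟫ = 0 := by rw [hx1, real_inner_smul_right, hzx]; ring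
    obtain ⟨y1, hy1⟩ : ∃ t : V, t = y - ⟪y,x1⟫ • x1 := ⟨_, rfl⟩
    have hzy1 : ⟪z,y1⟫ = 0 := by
      rw [hy1, inner_sub_right, real_inner_smul_right, hzy, hzx1]; ring
    have hx1y1 : ⟪x1,y1⟫ = 0 := by
      rw [hy1, inner_sub_right, real_inner_smul_right, nx1, real_inner_comm y x1]; ring
    have hkey : R x1 y1 z = 0 := by
      by_cases hy10 : y1 = 0
      · rw [hy10]; simp
      · have hny := norm_ne_zero_iff.2 hy10
        have ny2 : ⟪‖y1‖⁻¹ • y1, ‖y1‖⁻¹ • y1⟫ = 1 := by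
          rw [real_inner_smul_left, real_inner_smul_right, real_inner_self_eq_norm_mul_norm]
          field_simp
        have h0 := step x1 (‖y1‖⁻¹ • y1) nx1 ny2
          (by rw [real_inner_smul_right, hx1y1]; ring) z hzx1
          (by rw [real_inner_smul_right, hzy1]; ring)
        have hsm : R x1 y1 z = ‖y1‖ • R x1 (‖y1‖⁻¹ • y1) z := by
          rw [map_smul, LinearMap.smul_apply, smul_smul, mul_inv_cancel₀ hny, one_smul]
        rw [hsm, h0, smul_zero]
    have hxd : x = ‖x‖ • x1 := by
      rw [hx1, smul_smul, mul_inv_cancel₀ hnx, one_smul]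
    have hyd : y = y1 + ⟪y,x1⟫ • x1 := by rw [hy1]; abel
    calc R x y z = R (‖x‖ • x1) (y1 + ⟪y,x1⟫ • x1) z := by rw [← hxd, ← hyd]
      _ = 0 := by
        simp only [map_smul, map_add, LinearMap.smul_apply, LinearMap.add_apply,
          LinearMap.map_smul]
        rw [hkey]
        simp [hRxx x1]
  refine ⟨part1, ?_⟩
  intro x y w hw
  have hoo := Submodule.orthogonal_orthogonal (Submodule.span ℝ ({x,y} : Set V))
  rw [← hoo]
  rw [Submodule.mem_orthogonal]
  intro u hu
  have hux : ⟪u,x⟫ = 0 :=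
    Submodule.inner_left_of_mem_orthogonal (Submodule.subset_span (by simp)) hu
  have huy : ⟪u,y⟫ = 0 :=
    Submodule.inner_left_of_mem_orthogonal (Submodule.subset_span (by simp)) hu
  have h0 : R x y u = 0 := part1 x y u hux huy
  rw [real_inner_comm (R x y w) u, hR.2.1, h0]
  simp
end

section
/- Let V be an 8-dimensional real inner product space endowed with a 3-fold vector cross product χ, and let ξ ∈ V be a unit vector. Set W = ξ^⊥ and define χ_ξ : W × W → W by χ_ξ(x,y) := χ(ξ,x,y). Then: (a) χ_ξ is a 2-fold vector cross product on the 7-dimensional inner product space W; (b) for every A ∈ 𝒲(V), the map A|_W defined by A|_W(η₁; η₂,η₃,η₄) := A(η₁; ξ, η₂, η₃, η₄) for η₁,η₂,η₃,η₄ ∈ W is an algebraic intrinsic torsion on (W, χ_ξ); and (c) if A satisfies the second CR-integrability condition on (V,χ), then A|_W satisfies the second CR-integrability condition on (W, χ_ξ). -/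
open RealInnerProductSpace

variable {V : Type*} [NormedAddCommGroup V] [InnerProductSpace ℝ V]

/-- Given a 2-fold VCP `χ`, a unit vector `v` and a Hermitian frame `w = (w₁,w₂,w₃)`
for `v`, the extended frame `(w₁,w₂,w₃, χ(v,w₁), χ(v,w₂), χ(v,w₃))`. -/
def hermExt (χ : AlternatingMap ℝ V V (Fin 2)) (v : V) (w : Fin 3 → V) : Fin 6 → V :=
  Fin.append w fun k => χ ![v, w k]

/-- The second CR-integrability condition for an algebraic intrinsic torsion `A` on a
7-dimensional space with a 2-fold VCP `χ`: for every unit vector `v`, every Hermitian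
frame `(w₁,w₂,w₃)` for `v` (pairwise orthogonal unit vectors, orthogonal to `v`, with
`⟪wᵢ, χ(v,wⱼ)⟫ = 0`), extended by `w_{3+k} := χ(v,w_k)`, and all `j,p,q ∈ {1,…,6}`,
`A(χ(v,w_q); v,w_j,w_p) - A(χ(v,w_p); v,w_j,w_q)
  + A(w_q; v,χ(v,w_j),w_p) - A(w_p; v,χ(v,w_j),w_q) = 0`. -/
def SecondCR7 (χ : AlternatingMap ℝ V V (Fin 2))
    (A : V →ₗ[ℝ] AlternatingMap ℝ V ℝ (Fin 3)) : Prop :=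
  ∀ v : V, ‖v‖ = 1 → ∀ w : Fin 3 → V, Orthonormal ℝ w →
    (∀ i, ⟪w i, v⟫ = 0) → (∀ i j, ⟪w i, χ ![v, w j]⟫ = 0) →
    ∀ j p q : Fin 6,
      A (χ ![v, hermExt χ v w q]) ![v, hermExt χ v w j, hermExt χ v w p]
        - A (χ ![v, hermExt χ v w p]) ![v, hermExt χ v w j, hermExt χ v w q]
        + A (hermExt χ v w q) ![v, χ ![v, hermExt χ v w j], hermExt χ v w p]
        - A (hermExt χ v w p) ![v, χ ![v, hermExt χ v w j], hermExt χ v w q] = 0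

/-- Given a 3-fold VCP `χ`, an orthonormal pair `(v₁,v₂)` and a Hermitian frame
`w = (w₁,w₂,w₃)` for `(v₁,v₂)`, the extended frame
`(w₁,w₂,w₃, χ(v₁,v₂,w₁), χ(v₁,v₂,w₂), χ(v₁,v₂,w₃))`. -/
def hermExt8 (χ : AlternatingMap ℝ V V (Fin 3)) (v₁ v₂ : V) (w : Fin 3 → V) : Fin 6 → V :=
  Fin.append w fun k => χ ![v₁, v₂, w k]

/-- The second CR-integrability condition for an element `A` of `𝒲(V)` on an
8-dimensional space with a 3-fold VCP `χ`: for every orthonormal pair `(v₁,v₂)`,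
every Hermitian frame `(w₁,w₂,w₃)` for `(v₁,v₂)` (pairwise orthogonal unit vectors,
orthogonal to `v₁` and `v₂`, with `⟪wᵢ, χ(v₁,v₂,wⱼ)⟫ = 0`), extended by
`w_{3+k} := χ(v₁,v₂,w_k)`, and all `j,p,q ∈ {1,…,6}`,
`A(χ(v₁,v₂,w_q); v₁,v₂,w_j,w_p) - A(χ(v₁,v₂,w_p); v₁,v₂,w_j,w_q)
  + A(w_q; v₁,v₂,χ(v₁,v₂,w_j),w_p) - A(w_p; v₁,v₂,χ(v₁,v₂,w_j),w_q) = 0`. -/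
def SecondCR8 (χ : AlternatingMap ℝ V V (Fin 3))
    (A : V →ₗ[ℝ] AlternatingMap ℝ V ℝ (Fin 4)) : Prop :=
  ∀ v₁ v₂ : V, ‖v₁‖ = 1 → ‖v₂‖ = 1 → ⟪v₁, v₂⟫ = 0 →
    ∀ w : Fin 3 → V, Orthonormal ℝ w →
    (∀ i, ⟪w i, v₁⟫ = 0) → (∀ i, ⟪w i, v₂⟫ = 0) →
    (∀ i j, ⟪w i, χ ![v₁, v₂, w j]⟫ = 0) →
    ∀ j p q : Fin 6,
      A (χ ![v₁, v₂, hermExt8 χ v₁ v₂ w q])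
          ![v₁, v₂, hermExt8 χ v₁ v₂ w j, hermExt8 χ v₁ v₂ w p]
        - A (χ ![v₁, v₂, hermExt8 χ v₁ v₂ w p])
          ![v₁, v₂, hermExt8 χ v₁ v₂ w j, hermExt8 χ v₁ v₂ w q]
        + A (hermExt8 χ v₁ v₂ w q)
          ![v₁, v₂, χ ![v₁, v₂, hermExt8 χ v₁ v₂ w j], hermExt8 χ v₁ v₂ w p]
        - A (hermExt8 χ v₁ v₂ w p)
          ![v₁, v₂, χ ![v₁, v₂, hermExt8 χ v₁ v₂ w j], hermExt8 χ v₁ v₂ w q] = 0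

/-- Reduction from dimension 8 to dimension 7 for the second CR-integrability
condition. Let `ξ` be a unit vector in an 8-dimensional `(V,χ)` and `W = ξᗮ`.
Then: (a) `W` is 7-dimensional and the restriction `χ_ξ(x,y) = χ(ξ,x,y)` defines a
2-fold VCP `σ` on `W`; (b) for `A ∈ 𝒲(V)`, the restriction
`B(η₁; η₂,η₃,η₄) = A(η₁; ξ,η₂,η₃,η₄)` is an algebraic intrinsic torsion on `(W,σ)`;
(c) if `A` satisfies the second CR-integrability condition on `(V,χ)`, then `B`
satisfies the second CR-integrability condition on `(W,σ)`. -/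
theorem restriction_of_W_torsion {V : Type*} [NormedAddCommGroup V]
    [InnerProductSpace ℝ V] [FiniteDimensional ℝ V] (h8 : Module.finrank ℝ V = 8)
    (χ : AlternatingMap ℝ V V (Fin 3)) (hχ : IsVCP χ)
    (ξ : V) (hξ : ‖ξ‖ = 1)
    (A : V →ₗ[ℝ] AlternatingMap ℝ V ℝ (Fin 4))
    (hA : ∀ η₁ η₂ η₃ η₄ : V, A η₁ ![η₂, η₃, η₄, χ ![η₂, η₃, η₄]] = 0) :
    Module.finrank ℝ ↥((Submodule.span ℝ {ξ})ᗮ) = 7 ∧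
    ∃ σ : AlternatingMap ℝ ↥((Submodule.span ℝ {ξ})ᗮ) ↥((Submodule.span ℝ {ξ})ᗮ) (Fin 2),
      (∀ x y : ↥((Submodule.span ℝ {ξ})ᗮ), (σ ![x, y] : V) = χ ![ξ, ↑x, ↑y]) ∧
      IsVCP σ ∧
      ∃ B : ↥((Submodule.span ℝ {ξ})ᗮ) →ₗ[ℝ]
          AlternatingMap ℝ ↥((Submodule.span ℝ {ξ})ᗮ) ℝ (Fin 3),
        (∀ η₁ η₂ η₃ η₄ : ↥((Submodule.span ℝ {ξ})ᗮ),
          B η₁ ![η₂, η₃, η₄] = A ↑η₁ ![ξ, ↑η₂, ↑η₃, ↑η₄]) ∧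
        (∀ η₁ η₂ η₃ : ↥((Submodule.span ℝ {ξ})ᗮ), B η₁ ![η₂, η₃, σ ![η₂, η₃]] = 0) ∧
        (SecondCR8 χ A → SecondCR7 σ B) := by
  classical
  set W : Submodule ℝ V := (Submodule.span ℝ {ξ})ᗮ with hW
  have hξne : ξ ≠ 0 := by
    intro h; rw [h, norm_zero] at hξ; norm_num at hξ
  have hrank : Module.finrank ℝ W = 7 := by
    have h1 : Module.finrank ℝ (Submodule.span ℝ {ξ}) = 1 :=
      finrank_span_singleton hξne
    have h2 := Submodule.finrank_add_finrank_orthogonal (K := Submodule.span ℝ {ξ})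
    rw [← hW, h1, h8] at h2
    omega
  refine ⟨hrank, ?_⟩
  have hmemW : ∀ z : V, ⟪ξ, z⟫ = 0 → z ∈ W := fun z hz =>
    Submodule.mem_orthogonal_singleton_iff_inner_right.mpr hz
  have hχmem : ∀ x y : V, χ ![ξ, x, y] ∈ W := by
    intro x y
    apply hmemW
    have := (hχ.1) ![ξ, x, y] 0
    rw [real_inner_comm]
    simpa using this
  set σ : AlternatingMap ℝ W W (Fin 2) :=
    (Submodule.orthogonalProjectionOnto W).toLinearMap.compAlternatingMap
      ((χ.curryLeft ξ).compLinearMap W.subtype) with hσdef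
  have hσ : ∀ x y : W, (σ ![x, y] : V) = χ ![ξ, ↑x, ↑y] := by
    intro x y
    have htup : (Matrix.vecCons ξ fun i => W.subtype (![x, y] i)) = ![ξ, (x : V), (y : V)] := by
      funext i; fin_cases i <;> rfl
    have h1 : σ ![x, y] = Submodule.orthogonalProjectionOnto W (χ ![ξ, (x : V), (y : V)]) := by
      simp only [hσdef, LinearMap.compAlternatingMap_apply,
        AlternatingMap.compLinearMap_apply, AlternatingMap.curryLeft_apply_apply,
        ContinuousLinearMap.coe_coe]
      rw [htup]
    rw [h1]
    exact Submodule.starProjection_eq_self_iff.mpr (hχmem _ _)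
  refine ⟨σ, hσ, ?_, ?_⟩
  · -- IsVCP σ
    constructor
    · intro v i
      have hv : v = ![v 0, v 1] := by funext i; fin_cases i <;> rfl
      rw [Submodule.coe_inner]
      conv_lhs => rw [hv, hσ]
      fin_cases i
      · have := hχ.1 ![ξ, ((v 0 : W) : V), ((v 1 : W) : V)] 1
        simpa using this
      · have := hχ.1 ![ξ, ((v 0 : W) : V), ((v 1 : W) : V)] 2
        simpa using this
    · intro v
      have hv : v = ![v 0, v 1] := by funext i; fin_cases i <;> rfl
      rw [Submodule.coe_inner]
      conv_lhs => rw [hv, hσ]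
      have hgram := hχ.2 ![ξ, ((v 0 : W) : V), ((v 1 : W) : V)]
      have hξξ : ⟪ξ, ξ⟫ = 1 := by
        rw [real_inner_self_eq_norm_sq, hξ]; norm_num
      have h0 : ∀ i : Fin 2, ⟪ξ, ((v i : W) : V)⟫ = 0 := fun i =>
        Submodule.mem_orthogonal_singleton_iff_inner_right.mp (v i).2
      have h0' : ∀ i : Fin 2, ⟪((v i : W) : V), ξ⟫ = 0 := fun i => by
        rw [real_inner_comm]; exact h0 i
      rw [hgram]
      rw [Matrix.det_fin_three, Matrix.det_fin_two]
      simp only [Matrix.of_apply, Matrix.cons_val', Matrix.cons_val_zero,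
        Matrix.cons_val_one, Matrix.head_cons, Matrix.empty_val',
        Matrix.cons_val_fin_one, Matrix.head_fin_const, Matrix.cons_val_two,
        Matrix.tail_cons, Submodule.coe_inner]
      rw [hξξ, h0 0, h0 1, h0' 0, h0' 1]
      ring_nf
  · -- the intrinsic torsion B
    set B : W →ₗ[ℝ] AlternatingMap ℝ W ℝ (Fin 3) :=
      { toFun := fun η => ((A ↑η).curryLeft ξ).compLinearMap W.subtype
        map_add' := by
          intro x y
          ext m
          simp [inner_add_left]
        map_smul' := by
          intro c x
          ext m
          simp } with hBdef0
    have hBapp : ∀ η₁ η₂ η₃ η₄ : W,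
        B η₁ ![η₂, η₃, η₄] = A ↑η₁ ![ξ, ↑η₂, ↑η₃, ↑η₄] := by
      intro η₁ η₂ η₃ η₄
      show A ↑η₁ (Matrix.vecCons ξ fun i => W.subtype (![η₂, η₃, η₄] i)) = _
      congr 1
      funext i
      fin_cases i <;> rfl
    refine ⟨B, hBapp, ?_, ?_⟩
    · intro η₁ η₂ η₃
      rw [hBapp, show ((σ ![η₂, η₃] : W) : V) = χ ![ξ, ↑η₂, ↑η₃] from hσ η₂ η₃]
      exact hA ↑η₁ ξ ↑η₂ ↑η₃
    · -- second CR condition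
      intro hCR8
      intro v hv w hw hwv hherm j p q
      set w' : Fin 3 → V := fun i => ((w i : W) : V) with hw'
      have hcoe : ∀ k : Fin 6, ((hermExt σ v w k : W) : V) = hermExt8 χ ξ ↑v w' k := by
        intro k
        refine Fin.addCases (n := 3) (m := 3) ?_ ?_ k
        · intro i
          show ((Fin.append w (fun k => σ ![v, w k]) (Fin.castAdd 3 i) : W) : V) = _
          rw [hermExt8, Fin.append_left, Fin.append_left]
        · intro i
          show ((Fin.append w (fun k => σ ![v, w k]) (Fin.natAdd 3 i) : W) : V) = _
          rw [hermExt8, Fin.append_right, Fin.append_right, hσ]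
      have hnv : ‖(v : V)‖ = 1 := by rwa [Submodule.norm_coe]
      have hξv : ⟪ξ, (v : V)⟫ = 0 :=
        Submodule.mem_orthogonal_singleton_iff_inner_right.mp v.2
      have hw'on : Orthonormal ℝ w' := by
        rw [orthonormal_iff_ite] at hw ⊢
        intro i j
        have := hw i j
        rwa [Submodule.coe_inner] at this
      have hw'ξ : ∀ i, ⟪w' i, ξ⟫ = 0 := fun i => by
        rw [real_inner_comm]
        exact Submodule.mem_orthogonal_singleton_iff_inner_right.mp (w i).2
      have hw'v : ∀ i, ⟪w' i, (v : V)⟫ = 0 := fun i => by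
        have := hwv i
        rwa [Submodule.coe_inner] at this
      have hw'h : ∀ i k, ⟪w' i, χ ![ξ, ↑v, w' k]⟫ = 0 := fun i k => by
        have := hherm i k
        rw [Submodule.coe_inner, hσ] at this
        exact this
      have key := hCR8 ξ ↑v hξ hnv hξv w' hw'on hw'ξ hw'v hw'h j p q
      simp only [hBapp, hσ, hcoe]
      exact key
end

section
/- Let V be a 7-dimensional real inner product space endowed with a 2-fold vector cross product χ, and let G be the group of linear isometries γ of V satisfying γ(χ(x,y)) = χ(γx,γy) for all x,y ∈ V (the stabilizer of χ, a copy of the exceptional group G₂). If R is an algebraic curvature operator on V that is G-invariant, i.e., R(γx,γy) = γ ∘ R(x,y) ∘ γ⁻¹ for all γ ∈ G and all x,y ∈ V, then R is a real scalar multiple of R^Id. In other words, the space of G₂-invariant algebraic curvature operators on V has dimension 1. -/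
open RealInnerProductSpace

variable {V : Type*} [NormedAddCommGroup V] [InnerProductSpace ℝ V]

set_option linter.unusedSectionVars false
set_option maxHeartbeats 1000000
section aux
lemma upd0 (x y z : V) : Function.update ![x, y] 0 z = ![z, y] := by
  funext i; fin_cases i <;> simp
lemma upd1 (x y z : V) : Function.update ![x, y] 1 z = ![x, z] := by
  funext i; fin_cases i <;> simp

noncomputable def cpL (χ : AlternatingMap ℝ V V (Fin 2)) : V →ₗ[ℝ] V →ₗ[ℝ] V :=
  LinearMap.mk₂ ℝ (fun x y => χ ![x, y])
    (fun x x' y => by have := χ.map_update_add ![x, y] 0 x x'; simpa [upd0] using this)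
    (fun c x y => by have := χ.map_update_smul ![x, y] 0 c x; simpa [upd0] using this)
    (fun x y y' => by have := χ.map_update_add ![x, y] 1 y y'; simpa [upd1] using this)
    (fun c x y => by have := χ.map_update_smul ![x, y] 1 c y; simpa [upd1] using this)

lemma cpL_apply (χ : AlternatingMap ℝ V V (Fin 2)) (x y : V) : cpL χ x y = χ ![x, y] := rfl

section basics
variable {χ : AlternatingMap ℝ V V (Fin 2)} (hχ : IsVCP χ)

local notation x " ×ᵪ " y => cpL χ x y

lemma cp_anticomm (x y : V) : (x ×ᵪ y) = - (y ×ᵪ x) := by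
  have := χ.map_swap ![y, x] (i := (0:Fin 2)) (j := 1) (by decide)
  have h2 : (![y,x] ∘ ⇑(Equiv.swap (0:Fin 2) 1)) = ![x,y] := by
    funext i; fin_cases i <;> simp [Equiv.swap_apply_of_ne_of_ne]
  rw [cpL_apply, cpL_apply, ← h2, this]

include hχ

lemma inner_cp_left (x y : V) : ⟪(x ×ᵪ y), x⟫ = 0 := by
  simpa [cpL_apply] using hχ.1 ![x,y] 0

lemma inner_cp_right (x y : V) : ⟪(x ×ᵪ y), y⟫ = 0 := by
  simpa [cpL_apply] using hχ.1 ![x,y] 1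

lemma phi_swap23 (x y z : V) : ⟪(x ×ᵪ y), z⟫ = - ⟪(x ×ᵪ z), y⟫ := by
  have h := inner_cp_right hχ x (y + z)
  simp only [map_add, inner_add_left, inner_add_right] at h
  rw [inner_cp_right hχ x y, inner_cp_right hχ x z] at h
  linarith

lemma phi_swap12 (x y z : V) : ⟪(x ×ᵪ y), z⟫ = - ⟪(y ×ᵪ x), z⟫ := by
  rw [cp_anticomm (χ := χ) x y]; simp

lemma gram (x y : V) : ⟪(x ×ᵪ y), (x ×ᵪ y)⟫ = ⟪x,x⟫ * ⟪y,y⟫ - ⟪x,y⟫ * ⟪x,y⟫ := by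
  have := hχ.2 ![x,y]
  rw [cpL_apply]
  convert this using 1
  rw [show (Matrix.of fun i j : Fin 2 => ⟪![x,y] i, ![x,y] j⟫) = !![⟪x,x⟫, ⟪x,y⟫; ⟪y,x⟫, ⟪y,y⟫] by
    ext i j; fin_cases i <;> fin_cases j <;> simp]
  rw [Matrix.det_fin_two_of, real_inner_comm y x]

lemma gram_polar_right (x y z : V) :
    ⟪(x ×ᵪ y), (x ×ᵪ z)⟫ = ⟪x,x⟫ * ⟪y,z⟫ - ⟪x,y⟫ * ⟪x,z⟫ := by
  have h := gram hχ x (y + z)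
  simp only [map_add, inner_add_left, inner_add_right] at h
  rw [gram hχ x y, gram hχ x z] at h
  have c1 : ⟪(x ×ᵪ y), (x ×ᵪ z)⟫ = ⟪(x ×ᵪ z), (x ×ᵪ y)⟫ := real_inner_comm _ _
  have c2 : ⟪z, y⟫ = ⟪y, z⟫ := real_inner_comm _ _
  have c3 : ⟪z, x⟫ = ⟪x, z⟫ := real_inner_comm _ _
  linear_combination h/2 + c1/2 + (⟪x,x⟫/2) * c2

lemma gram_polar_left (x y z : V) :
    ⟪(x ×ᵪ z), (y ×ᵪ z)⟫ = ⟪x,y⟫ * ⟪z,z⟫ - ⟪x,z⟫ * ⟪y,z⟫ := by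
  rw [cp_anticomm (χ := χ) x z, cp_anticomm (χ := χ) y z, inner_neg_neg, gram_polar_right hχ]
  have c2 : ⟪z, y⟫ = ⟪y, z⟫ := real_inner_comm _ _
  have c3 : ⟪z, x⟫ = ⟪x, z⟫ := real_inner_comm _ _
  linear_combination (-⟪z,y⟫) * c3 - ⟪x,z⟫ * c2

lemma double (x y : V) : (x ×ᵪ (x ×ᵪ y)) = ⟪x,y⟫ • x - ⟪x,x⟫ • y := by
  apply ext_inner_right ℝ
  intro w
  have h1 : ⟪(x ×ᵪ (x ×ᵪ y)), w⟫ = - ⟪(x ×ᵪ w), (x ×ᵪ y)⟫ := phi_swap23 hχ x _ w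
  rw [h1, gram_polar_right hχ]
  simp only [inner_sub_left, real_inner_smul_left]
  have c2 : ⟪w, y⟫ = ⟪y, w⟫ := real_inner_comm _ _
  have c3 : ⟪w, x⟫ = ⟪x, w⟫ := real_inner_comm _ _
  linear_combination (-⟪x,x⟫) * c2

lemma doubleQ (x z y : V) :
    (x ×ᵪ (z ×ᵪ y)) + (z ×ᵪ (x ×ᵪ y)) = ⟪x,y⟫ • z + ⟪z,y⟫ • x - (2 * ⟪x,z⟫) • y := by
  have h := double hχ (x + z) y
  simp only [map_add, LinearMap.add_apply, inner_add_left, inner_add_right] at h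
  rw [double hχ x y, double hχ z y] at h
  have hzx : ⟪z,x⟫ = ⟪x,z⟫ := real_inner_comm _ _
  rw [hzx] at h
  linear_combination (norm := module) h

end basics

/-- An adapted triple for the cross product. -/
structure Adapted (χ : AlternatingMap ℝ V V (Fin 2)) (a b d : V) : Prop where
  haa : ⟪a,a⟫ = 1
  hbb : ⟪b,b⟫ = 1
  hdd : ⟪d,d⟫ = 1
  hab : ⟪a,b⟫ = 0
  had : ⟪a,d⟫ = 0
  hbd : ⟪b,d⟫ = 0
  habd : ⟪cpL χ a b, d⟫ = 0

section frame
variable {χ : AlternatingMap ℝ V V (Fin 2)}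

local notation x " ×ᵪ " y => cpL χ x y

lemma cp_self_s14 (x : V) : (x ×ᵪ x) = 0 := by
  have := χ.map_eq_zero_of_eq ![x,x] (i := 0) (j := 1) (by simp) (by decide)
  simpa [cpL_apply] using this

namespace Adapted

variable (hχ : IsVCP χ) {a b d : V} (H : Adapted χ a b d)
include hχ H

lemma i02 : ⟪a, (a ×ᵪ b)⟫ = 0 := by
  rw [real_inner_comm]; exact inner_cp_left hχ a b
lemma i12 : ⟪b, (a ×ᵪ b)⟫ = 0 := by
  rw [real_inner_comm]; exact inner_cp_right hχ a b
lemma i04 : ⟪a, (a ×ᵪ d)⟫ = 0 := by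
  rw [real_inner_comm]; exact inner_cp_left hχ a d
lemma i34 : ⟪d, (a ×ᵪ d)⟫ = 0 := by
  rw [real_inner_comm]; exact inner_cp_right hχ a d
lemma i15 : ⟪b, (b ×ᵪ d)⟫ = 0 := by
  rw [real_inner_comm]; exact inner_cp_left hχ b d
lemma i35 : ⟪d, (b ×ᵪ d)⟫ = 0 := by
  rw [real_inner_comm]; exact inner_cp_right hχ b d
lemma i26 : ⟪(a ×ᵪ b), ((a ×ᵪ b) ×ᵪ d)⟫ = 0 := by
  rw [real_inner_comm]; exact inner_cp_left hχ _ d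
lemma i36 : ⟪d, ((a ×ᵪ b) ×ᵪ d)⟫ = 0 := by
  rw [real_inner_comm]; exact inner_cp_right hχ _ d
lemma i05 : ⟪a, (b ×ᵪ d)⟫ = 0 := by
  rw [real_inner_comm, phi_swap23 hχ b d a, phi_swap12 hχ b a d, H.habd]; ring
lemma i14 : ⟪b, (a ×ᵪ d)⟫ = 0 := by
  rw [real_inner_comm, phi_swap23 hχ a d b, H.habd]; ring
lemma i25 : ⟪(a ×ᵪ b), (b ×ᵪ d)⟫ = 0 := by
  rw [cp_anticomm (χ := χ) a b, inner_neg_left, gram_polar_right hχ b a d, H.had, H.hbd]; ring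
lemma i24 : ⟪(a ×ᵪ b), (a ×ᵪ d)⟫ = 0 := by
  rw [gram_polar_right hχ a b d, H.hbd, H.hab]; ring
lemma i45 : ⟪(a ×ᵪ d), (b ×ᵪ d)⟫ = 0 := by
  rw [gram_polar_left hχ a b d, H.hab, H.had]; ring
lemma n2 : ⟪(a ×ᵪ b), (a ×ᵪ b)⟫ = 1 := by
  rw [gram hχ a b, H.haa, H.hbb, H.hab]; ring
lemma n4 : ⟪(a ×ᵪ d), (a ×ᵪ d)⟫ = 1 := by
  rw [gram hχ a d, H.haa, H.hdd, H.had]; ring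
lemma n5 : ⟪(b ×ᵪ d), (b ×ᵪ d)⟫ = 1 := by
  rw [gram hχ b d, H.hbb, H.hdd, H.hbd]; ring
lemma n6 : ⟪((a ×ᵪ b) ×ᵪ d), ((a ×ᵪ b) ×ᵪ d)⟫ = 1 := by
  rw [gram hχ _ d, n2 hχ H, H.hdd, H.habd]; ring
lemma i46 : ⟪(a ×ᵪ d), ((a ×ᵪ b) ×ᵪ d)⟫ = 0 := by
  rw [gram_polar_left hχ a (cpL χ a b) d, i02 hχ H, H.had]; ring
lemma i56 : ⟪(b ×ᵪ d), ((a ×ᵪ b) ×ᵪ d)⟫ = 0 := by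
  rw [gram_polar_left hχ b (cpL χ a b) d, i12 hχ H, H.hbd]; ring

lemma p02 : (a ×ᵪ (a ×ᵪ b)) = -b := by
  rw [double hχ, H.hab, H.haa]; simp
lemma p04 : (a ×ᵪ (a ×ᵪ d)) = -d := by
  rw [double hχ, H.had, H.haa]; simp
lemma p15 : (b ×ᵪ (b ×ᵪ d)) = -d := by
  rw [double hχ, H.hbd, H.hbb]; simp
lemma p12 : (b ×ᵪ (a ×ᵪ b)) = a := by
  rw [cp_anticomm (χ := χ) a b, map_neg, double hχ, real_inner_comm a b, H.hab, H.hbb]; simp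
lemma p34 : (d ×ᵪ (a ×ᵪ d)) = a := by
  rw [cp_anticomm (χ := χ) a d, map_neg, double hχ, real_inner_comm a d, H.had, H.hdd]; simp
lemma p35 : (d ×ᵪ (b ×ᵪ d)) = b := by
  rw [cp_anticomm (χ := χ) b d, map_neg, double hχ, real_inner_comm b d, H.hbd, H.hdd]; simp
lemma p26 : ((a ×ᵪ b) ×ᵪ ((a ×ᵪ b) ×ᵪ d)) = -d := by
  rw [double hχ, H.habd, n2 hχ H]; simp
lemma p36 : (d ×ᵪ ((a ×ᵪ b) ×ᵪ d)) = (a ×ᵪ b) := by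
  rw [cp_anticomm (χ := χ) (cpL χ a b) d, map_neg, double hχ,
    real_inner_comm (cpL χ a b) d, H.habd, H.hdd]; simp

lemma q20 : ((a ×ᵪ b) ×ᵪ a) = b := by
  rw [cp_anticomm (χ := χ) (cpL χ a b) a, p02 hχ H]; simp
lemma q21 : ((a ×ᵪ b) ×ᵪ b) = -a := by
  rw [cp_anticomm (χ := χ) (cpL χ a b) b, p12 hχ H]
lemma q43 : ((a ×ᵪ d) ×ᵪ d) = -a := by
  rw [cp_anticomm (χ := χ) (cpL χ a d) d, p34 hχ H]
lemma q53 : ((b ×ᵪ d) ×ᵪ d) = -b := by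
  rw [cp_anticomm (χ := χ) (cpL χ b d) d, p35 hχ H]

lemma i06 : ⟪a, ((a ×ᵪ b) ×ᵪ d)⟫ = 0 := by
  rw [real_inner_comm, phi_swap23 hχ (cpL χ a b) d a, q20 hχ H, H.hbd]; ring
lemma i16 : ⟪b, ((a ×ᵪ b) ×ᵪ d)⟫ = 0 := by
  rw [real_inner_comm, phi_swap23 hχ (cpL χ a b) d b, q21 hχ H, inner_neg_left, H.had]; ring

lemma p14 : (b ×ᵪ (a ×ᵪ d)) = ((a ×ᵪ b) ×ᵪ d) := by
  have h := double hχ (b + d) a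
  simp only [map_add, LinearMap.add_apply] at h
  rw [cp_anticomm (χ := χ) b a, cp_anticomm (χ := χ) d a] at h
  simp only [map_neg, LinearMap.neg_apply] at h
  rw [p12 hχ H, p34 hχ H, cp_anticomm (χ := χ) d (cpL χ a b)] at h
  simp only [inner_add_left, inner_add_right] at h
  rw [real_inner_comm a b, real_inner_comm a d, real_inner_comm b d] at h
  rw [H.hab, H.had, H.hbd, H.hbb, H.hdd] at h
  linear_combination (norm := module) (-1 : ℝ) • h

lemma p24 : ((a ×ᵪ b) ×ᵪ (a ×ᵪ d)) = -(b ×ᵪ d) := by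
  have h := double hχ (cpL χ a b + d) a
  simp only [map_add, LinearMap.add_apply] at h
  rw [q20 hχ H, cp_anticomm (χ := χ) d a] at h
  simp only [map_neg, LinearMap.neg_apply] at h
  rw [p34 hχ H, q21 hχ H, cp_anticomm (χ := χ) d b] at h
  simp only [inner_add_left, inner_add_right] at h
  rw [inner_cp_left hχ a b, real_inner_comm a d, real_inner_comm (cpL χ a b) d] at h
  rw [H.had, H.habd, H.hdd, n2 hχ H] at h
  linear_combination (norm := module) (-1 : ℝ) • h

lemma p25 : ((a ×ᵪ b) ×ᵪ (b ×ᵪ d)) = (a ×ᵪ d) := by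
  have h := double hχ (cpL χ a b + d) b
  simp only [map_add, LinearMap.add_apply] at h
  rw [q21 hχ H, cp_anticomm (χ := χ) d b] at h
  simp only [map_neg, LinearMap.neg_apply] at h
  rw [p35 hχ H, q20 hχ H, cp_anticomm (χ := χ) d a] at h
  simp only [inner_add_left, inner_add_right] at h
  rw [inner_cp_right hχ a b, real_inner_comm b d, real_inner_comm (cpL χ a b) d] at h
  rw [H.hbd, H.habd, H.hdd, n2 hχ H] at h
  linear_combination (norm := module) (-1 : ℝ) • h

lemma p05 : (a ×ᵪ (b ×ᵪ d)) = -((a ×ᵪ b) ×ᵪ d) := by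
  have h := doubleQ hχ a b d
  rw [p14 hχ H, H.had, H.hbd, H.hab] at h
  linear_combination (norm := module) h

lemma p06 : (a ×ᵪ ((a ×ᵪ b) ×ᵪ d)) = (b ×ᵪ d) := by
  have h := doubleQ hχ a (cpL χ a b) d
  rw [p24 hχ H, H.had, H.habd, i02 hχ H] at h
  linear_combination (norm := module) h

lemma p16 : (b ×ᵪ ((a ×ᵪ b) ×ᵪ d)) = -(a ×ᵪ d) := by
  have h := doubleQ hχ b (cpL χ a b) d
  rw [p25 hχ H, H.hbd, H.habd, i12 hχ H] at h
  linear_combination (norm := module) h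

lemma p45 : ((a ×ᵪ d) ×ᵪ (b ×ᵪ d)) = -(a ×ᵪ b) := by
  have h := doubleQ hχ (cpL χ a d) b d
  rw [q43 hχ H] at h
  simp only [map_neg, LinearMap.neg_apply] at h
  rw [cp_anticomm (χ := χ) b a] at h
  rw [inner_cp_right hχ a d, H.hbd, real_inner_comm b (cpL χ a d), i14 hχ H] at h
  linear_combination (norm := module) h

lemma p46 : ((a ×ᵪ d) ×ᵪ ((a ×ᵪ b) ×ᵪ d)) = b := by
  have h := doubleQ hχ (cpL χ a d) (cpL χ a b) d
  rw [q43 hχ H] at h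
  simp only [map_neg, LinearMap.neg_apply] at h
  rw [q20 hχ H, inner_cp_right hχ a d, H.habd,
    real_inner_comm (cpL χ a b) (cpL χ a d), i24 hχ H] at h
  linear_combination (norm := module) h

lemma p56 : ((b ×ᵪ d) ×ᵪ ((a ×ᵪ b) ×ᵪ d)) = -a := by
  have h := doubleQ hχ (cpL χ b d) (cpL χ a b) d
  rw [q53 hχ H] at h
  simp only [map_neg, LinearMap.neg_apply] at h
  rw [q21 hχ H, inner_cp_right hχ b d, H.habd,
    real_inner_comm (cpL χ a b) (cpL χ b d), i25 hχ H] at h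
  linear_combination (norm := module) h

end Adapted
end frame

noncomputable def frameE (χ : AlternatingMap ℝ V V (Fin 2)) (a b d : V) : Fin 7 → V :=
  ![a, b, cpL χ a b, d, cpL χ a d, cpL χ b d, cpL χ (cpL χ a b) d]

def tidx : Fin 7 → Fin 7 → Fin 7 :=
  ![![0,2,1,4,3,6,5], ![2,0,0,5,6,3,4], ![1,0,0,6,5,4,3], ![4,5,6,0,0,1,2],
    ![3,6,5,0,0,2,1], ![6,3,4,1,2,0,0], ![5,4,3,2,1,0,0]]

def tval : Fin 7 → Fin 7 → ℝ :=
  ![![0,1,-1,1,-1,-1,1], ![-1,0,1,1,1,-1,-1], ![1,-1,0,1,-1,1,-1], ![-1,-1,-1,0,1,1,1],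
    ![1,-1,1,-1,0,-1,1], ![1,1,-1,-1,1,0,-1], ![-1,1,1,-1,-1,1,0]]

theorem frame_table {χ : AlternatingMap ℝ V V (Fin 2)} (hχ : IsVCP χ) {a b d : V}
    (H : Adapted χ a b d) (i j : Fin 7) : cpL χ (frameE χ a b d i) (frameE χ a b d j)
      = tval i j • frameE χ a b d (tidx i j) := by
  fin_cases i <;> fin_cases j
  · show cpL χ a a = (0 : ℝ) • a
    rw [cp_self_s14 (χ := χ) a]; module
  · show cpL χ a b = (1 : ℝ) • (cpL χ a b)
    module
  · show cpL χ a (cpL χ a b) = (-1 : ℝ) • b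
    rw [Adapted.p02 hχ H]; module
  · show cpL χ a d = (1 : ℝ) • (cpL χ a d)
    module
  · show cpL χ a (cpL χ a d) = (-1 : ℝ) • d
    rw [Adapted.p04 hχ H]; module
  · show cpL χ a (cpL χ b d) = (-1 : ℝ) • (cpL χ (cpL χ a b) d)
    rw [Adapted.p05 hχ H]; module
  · show cpL χ a (cpL χ (cpL χ a b) d) = (1 : ℝ) • (cpL χ b d)
    rw [Adapted.p06 hχ H]; module
  · show cpL χ b a = (-1 : ℝ) • (cpL χ a b)
    rw [cp_anticomm (χ := χ) b a]; module
  · show cpL χ b b = (0 : ℝ) • a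
    rw [cp_self_s14 (χ := χ) b]; module
  · show cpL χ b (cpL χ a b) = (1 : ℝ) • a
    rw [Adapted.p12 hχ H]; module
  · show cpL χ b d = (1 : ℝ) • (cpL χ b d)
    module
  · show cpL χ b (cpL χ a d) = (1 : ℝ) • (cpL χ (cpL χ a b) d)
    rw [Adapted.p14 hχ H]; module
  · show cpL χ b (cpL χ b d) = (-1 : ℝ) • d
    rw [Adapted.p15 hχ H]; module
  · show cpL χ b (cpL χ (cpL χ a b) d) = (-1 : ℝ) • (cpL χ a d)
    rw [Adapted.p16 hχ H]; module
  · show cpL χ (cpL χ a b) a = (1 : ℝ) • b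
    rw [cp_anticomm (χ := χ) (cpL χ a b) a, Adapted.p02 hχ H]; module
  · show cpL χ (cpL χ a b) b = (-1 : ℝ) • a
    rw [cp_anticomm (χ := χ) (cpL χ a b) b, Adapted.p12 hχ H]; module
  · show cpL χ (cpL χ a b) (cpL χ a b) = (0 : ℝ) • a
    rw [cp_self_s14 (χ := χ) (cpL χ a b)]; module
  · show cpL χ (cpL χ a b) d = (1 : ℝ) • (cpL χ (cpL χ a b) d)
    module
  · show cpL χ (cpL χ a b) (cpL χ a d) = (-1 : ℝ) • (cpL χ b d)
    rw [Adapted.p24 hχ H]; module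
  · show cpL χ (cpL χ a b) (cpL χ b d) = (1 : ℝ) • (cpL χ a d)
    rw [Adapted.p25 hχ H]; module
  · show cpL χ (cpL χ a b) (cpL χ (cpL χ a b) d) = (-1 : ℝ) • d
    rw [Adapted.p26 hχ H]; module
  · show cpL χ d a = (-1 : ℝ) • (cpL χ a d)
    rw [cp_anticomm (χ := χ) d a]; module
  · show cpL χ d b = (-1 : ℝ) • (cpL χ b d)
    rw [cp_anticomm (χ := χ) d b]; module
  · show cpL χ d (cpL χ a b) = (-1 : ℝ) • (cpL χ (cpL χ a b) d)
    rw [cp_anticomm (χ := χ) d (cpL χ a b)]; module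
  · show cpL χ d d = (0 : ℝ) • a
    rw [cp_self_s14 (χ := χ) d]; module
  · show cpL χ d (cpL χ a d) = (1 : ℝ) • a
    rw [Adapted.p34 hχ H]; module
  · show cpL χ d (cpL χ b d) = (1 : ℝ) • b
    rw [Adapted.p35 hχ H]; module
  · show cpL χ d (cpL χ (cpL χ a b) d) = (1 : ℝ) • (cpL χ a b)
    rw [Adapted.p36 hχ H]; module
  · show cpL χ (cpL χ a d) a = (1 : ℝ) • d
    rw [cp_anticomm (χ := χ) (cpL χ a d) a, Adapted.p04 hχ H]; module
  · show cpL χ (cpL χ a d) b = (-1 : ℝ) • (cpL χ (cpL χ a b) d)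
    rw [cp_anticomm (χ := χ) (cpL χ a d) b, Adapted.p14 hχ H]; module
  · show cpL χ (cpL χ a d) (cpL χ a b) = (1 : ℝ) • (cpL χ b d)
    rw [cp_anticomm (χ := χ) (cpL χ a d) (cpL χ a b), Adapted.p24 hχ H]; module
  · show cpL χ (cpL χ a d) d = (-1 : ℝ) • a
    rw [cp_anticomm (χ := χ) (cpL χ a d) d, Adapted.p34 hχ H]; module
  · show cpL χ (cpL χ a d) (cpL χ a d) = (0 : ℝ) • a
    rw [cp_self_s14 (χ := χ) (cpL χ a d)]; module
  · show cpL χ (cpL χ a d) (cpL χ b d) = (-1 : ℝ) • (cpL χ a b)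
    rw [Adapted.p45 hχ H]; module
  · show cpL χ (cpL χ a d) (cpL χ (cpL χ a b) d) = (1 : ℝ) • b
    rw [Adapted.p46 hχ H]; module
  · show cpL χ (cpL χ b d) a = (1 : ℝ) • (cpL χ (cpL χ a b) d)
    rw [cp_anticomm (χ := χ) (cpL χ b d) a, Adapted.p05 hχ H]; module
  · show cpL χ (cpL χ b d) b = (1 : ℝ) • d
    rw [cp_anticomm (χ := χ) (cpL χ b d) b, Adapted.p15 hχ H]; module
  · show cpL χ (cpL χ b d) (cpL χ a b) = (-1 : ℝ) • (cpL χ a d)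
    rw [cp_anticomm (χ := χ) (cpL χ b d) (cpL χ a b), Adapted.p25 hχ H]; module
  · show cpL χ (cpL χ b d) d = (-1 : ℝ) • b
    rw [cp_anticomm (χ := χ) (cpL χ b d) d, Adapted.p35 hχ H]; module
  · show cpL χ (cpL χ b d) (cpL χ a d) = (1 : ℝ) • (cpL χ a b)
    rw [cp_anticomm (χ := χ) (cpL χ b d) (cpL χ a d), Adapted.p45 hχ H]; module
  · show cpL χ (cpL χ b d) (cpL χ b d) = (0 : ℝ) • a
    rw [cp_self_s14 (χ := χ) (cpL χ b d)]; module
  · show cpL χ (cpL χ b d) (cpL χ (cpL χ a b) d) = (-1 : ℝ) • a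
    rw [Adapted.p56 hχ H]; module
  · show cpL χ (cpL χ (cpL χ a b) d) a = (-1 : ℝ) • (cpL χ b d)
    rw [cp_anticomm (χ := χ) (cpL χ (cpL χ a b) d) a, Adapted.p06 hχ H]; module
  · show cpL χ (cpL χ (cpL χ a b) d) b = (1 : ℝ) • (cpL χ a d)
    rw [cp_anticomm (χ := χ) (cpL χ (cpL χ a b) d) b, Adapted.p16 hχ H]; module
  · show cpL χ (cpL χ (cpL χ a b) d) (cpL χ a b) = (1 : ℝ) • d
    rw [cp_anticomm (χ := χ) (cpL χ (cpL χ a b) d) (cpL χ a b), Adapted.p26 hχ H]; module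
  · show cpL χ (cpL χ (cpL χ a b) d) d = (-1 : ℝ) • (cpL χ a b)
    rw [cp_anticomm (χ := χ) (cpL χ (cpL χ a b) d) d, Adapted.p36 hχ H]; module
  · show cpL χ (cpL χ (cpL χ a b) d) (cpL χ a d) = (-1 : ℝ) • b
    rw [cp_anticomm (χ := χ) (cpL χ (cpL χ a b) d) (cpL χ a d), Adapted.p46 hχ H]; module
  · show cpL χ (cpL χ (cpL χ a b) d) (cpL χ b d) = (1 : ℝ) • a
    rw [cp_anticomm (χ := χ) (cpL χ (cpL χ a b) d) (cpL χ b d), Adapted.p56 hχ H]; module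
  · show cpL χ (cpL χ (cpL χ a b) d) (cpL χ (cpL χ a b) d) = (0 : ℝ) • a
    rw [cp_self_s14 (χ := χ) (cpL χ (cpL χ a b) d)]; module

theorem frame_orthonormal {χ : AlternatingMap ℝ V V (Fin 2)} (hχ : IsVCP χ) {a b d : V}
    (H : Adapted χ a b d) : Orthonormal ℝ (frameE χ a b d) := by
  rw [orthonormal_iff_ite]
  intro i j
  fin_cases i <;> fin_cases j
  · show ⟪a, a⟫ = (1 : ℝ)
    exact H.haa
  · show ⟪a, b⟫ = (0 : ℝ)
    exact H.hab
  · show ⟪a, (cpL χ a b)⟫ = (0 : ℝ)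
    exact Adapted.i02 hχ H
  · show ⟪a, d⟫ = (0 : ℝ)
    exact H.had
  · show ⟪a, (cpL χ a d)⟫ = (0 : ℝ)
    exact Adapted.i04 hχ H
  · show ⟪a, (cpL χ b d)⟫ = (0 : ℝ)
    exact Adapted.i05 hχ H
  · show ⟪a, (cpL χ (cpL χ a b) d)⟫ = (0 : ℝ)
    exact Adapted.i06 hχ H
  · show ⟪b, a⟫ = (0 : ℝ)
    rw [real_inner_comm]; exact H.hab
  · show ⟪b, b⟫ = (1 : ℝ)
    exact H.hbb
  · show ⟪b, (cpL χ a b)⟫ = (0 : ℝ)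
    exact Adapted.i12 hχ H
  · show ⟪b, d⟫ = (0 : ℝ)
    exact H.hbd
  · show ⟪b, (cpL χ a d)⟫ = (0 : ℝ)
    exact Adapted.i14 hχ H
  · show ⟪b, (cpL χ b d)⟫ = (0 : ℝ)
    exact Adapted.i15 hχ H
  · show ⟪b, (cpL χ (cpL χ a b) d)⟫ = (0 : ℝ)
    exact Adapted.i16 hχ H
  · show ⟪(cpL χ a b), a⟫ = (0 : ℝ)
    rw [real_inner_comm]; exact Adapted.i02 hχ H
  · show ⟪(cpL χ a b), b⟫ = (0 : ℝ)
    rw [real_inner_comm]; exact Adapted.i12 hχ H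
  · show ⟪(cpL χ a b), (cpL χ a b)⟫ = (1 : ℝ)
    exact Adapted.n2 hχ H
  · show ⟪(cpL χ a b), d⟫ = (0 : ℝ)
    exact H.habd
  · show ⟪(cpL χ a b), (cpL χ a d)⟫ = (0 : ℝ)
    exact Adapted.i24 hχ H
  · show ⟪(cpL χ a b), (cpL χ b d)⟫ = (0 : ℝ)
    exact Adapted.i25 hχ H
  · show ⟪(cpL χ a b), (cpL χ (cpL χ a b) d)⟫ = (0 : ℝ)
    exact Adapted.i26 hχ H
  · show ⟪d, a⟫ = (0 : ℝ)
    rw [real_inner_comm]; exact H.had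
  · show ⟪d, b⟫ = (0 : ℝ)
    rw [real_inner_comm]; exact H.hbd
  · show ⟪d, (cpL χ a b)⟫ = (0 : ℝ)
    rw [real_inner_comm]; exact H.habd
  · show ⟪d, d⟫ = (1 : ℝ)
    exact H.hdd
  · show ⟪d, (cpL χ a d)⟫ = (0 : ℝ)
    exact Adapted.i34 hχ H
  · show ⟪d, (cpL χ b d)⟫ = (0 : ℝ)
    exact Adapted.i35 hχ H
  · show ⟪d, (cpL χ (cpL χ a b) d)⟫ = (0 : ℝ)
    exact Adapted.i36 hχ H
  · show ⟪(cpL χ a d), a⟫ = (0 : ℝ)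
    rw [real_inner_comm]; exact Adapted.i04 hχ H
  · show ⟪(cpL χ a d), b⟫ = (0 : ℝ)
    rw [real_inner_comm]; exact Adapted.i14 hχ H
  · show ⟪(cpL χ a d), (cpL χ a b)⟫ = (0 : ℝ)
    rw [real_inner_comm]; exact Adapted.i24 hχ H
  · show ⟪(cpL χ a d), d⟫ = (0 : ℝ)
    rw [real_inner_comm]; exact Adapted.i34 hχ H
  · show ⟪(cpL χ a d), (cpL χ a d)⟫ = (1 : ℝ)
    exact Adapted.n4 hχ H
  · show ⟪(cpL χ a d), (cpL χ b d)⟫ = (0 : ℝ)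
    exact Adapted.i45 hχ H
  · show ⟪(cpL χ a d), (cpL χ (cpL χ a b) d)⟫ = (0 : ℝ)
    exact Adapted.i46 hχ H
  · show ⟪(cpL χ b d), a⟫ = (0 : ℝ)
    rw [real_inner_comm]; exact Adapted.i05 hχ H
  · show ⟪(cpL χ b d), b⟫ = (0 : ℝ)
    rw [real_inner_comm]; exact Adapted.i15 hχ H
  · show ⟪(cpL χ b d), (cpL χ a b)⟫ = (0 : ℝ)
    rw [real_inner_comm]; exact Adapted.i25 hχ H
  · show ⟪(cpL χ b d), d⟫ = (0 : ℝ)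
    rw [real_inner_comm]; exact Adapted.i35 hχ H
  · show ⟪(cpL χ b d), (cpL χ a d)⟫ = (0 : ℝ)
    rw [real_inner_comm]; exact Adapted.i45 hχ H
  · show ⟪(cpL χ b d), (cpL χ b d)⟫ = (1 : ℝ)
    exact Adapted.n5 hχ H
  · show ⟪(cpL χ b d), (cpL χ (cpL χ a b) d)⟫ = (0 : ℝ)
    exact Adapted.i56 hχ H
  · show ⟪(cpL χ (cpL χ a b) d), a⟫ = (0 : ℝ)
    rw [real_inner_comm]; exact Adapted.i06 hχ H
  · show ⟪(cpL χ (cpL χ a b) d), b⟫ = (0 : ℝ)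
    rw [real_inner_comm]; exact Adapted.i16 hχ H
  · show ⟪(cpL χ (cpL χ a b) d), (cpL χ a b)⟫ = (0 : ℝ)
    rw [real_inner_comm]; exact Adapted.i26 hχ H
  · show ⟪(cpL χ (cpL χ a b) d), d⟫ = (0 : ℝ)
    rw [real_inner_comm]; exact Adapted.i36 hχ H
  · show ⟪(cpL χ (cpL χ a b) d), (cpL χ a d)⟫ = (0 : ℝ)
    rw [real_inner_comm]; exact Adapted.i46 hχ H
  · show ⟪(cpL χ (cpL χ a b) d), (cpL χ b d)⟫ = (0 : ℝ)
    rw [real_inner_comm]; exact Adapted.i56 hχ H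
  · show ⟪(cpL χ (cpL χ a b) d), (cpL χ (cpL χ a b) d)⟫ = (1 : ℝ)
    exact Adapted.n6 hχ H

section exists_part
variable [FiniteDimensional ℝ V]

lemma exists_unit_orthogonal (W : Submodule ℝ V) (h : Module.finrank ℝ W < Module.finrank ℝ V) :
    ∃ v : V, ⟪v,v⟫ = 1 ∧ ∀ u ∈ W, ⟪u, v⟫ = 0 := by
  have hadd := Submodule.finrank_add_finrank_orthogonal (𝕜 := ℝ) (E := V) W
  have hpos : 0 < Module.finrank ℝ Wᗮ := by omega
  rw [Module.finrank_pos_iff] at hpos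
  obtain ⟨⟨v, hvW⟩, hv0⟩ := exists_ne (0 : Wᗮ)
  have hv : v ≠ 0 := by
    intro h'; apply hv0; ext; simp [h']
  refine ⟨‖v‖⁻¹ • v, ?_, ?_⟩
  · rw [real_inner_smul_left, real_inner_smul_right, real_inner_self_eq_norm_sq]
    have : ‖v‖ ≠ 0 := norm_ne_zero_iff.2 hv
    field_simp
  · intro u hu
    rw [real_inner_smul_right]
    have := (Submodule.mem_orthogonal W v).1 hvW u hu
    rw [this, mul_zero]

lemma exists_adapted {χ : AlternatingMap ℝ V V (Fin 2)}
    (h7 : Module.finrank ℝ V = 7) {a b : V}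
    (ha : ⟪a,a⟫ = 1) (hb : ⟪b,b⟫ = 1) (hab : ⟪a,b⟫ = 0) :
    ∃ d : V, Adapted χ a b d := by
  set W := Submodule.span ℝ (Set.range ![a, b, cpL χ a b]) with hW
  have hle : Module.finrank ℝ W ≤ 3 := by
    classical
    haveI : Fintype ↑(Set.range ![a, b, cpL χ a b]) := Set.fintypeRange _
    refine (finrank_span_le_card _).trans ?_
    have h1 : (Set.range ![a, b, cpL χ a b]).toFinset.card
        = Fintype.card (Set.range ![a, b, cpL χ a b]) := Set.toFinset_card _
    have h2 := Fintype.card_range_le ![a, b, cpL χ a b]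
    simpa [h1] using h2
  obtain ⟨d, hd1, hd2⟩ := exists_unit_orthogonal W (by omega)
  have hmem : ∀ x ∈ Set.range ![a, b, cpL χ a b], x ∈ W := fun x hx => Submodule.subset_span hx
  refine ⟨d, ⟨ha, hb, hd1, hab, ?_, ?_, ?_⟩⟩
  · exact hd2 a (hmem a ⟨0, rfl⟩)
  · exact hd2 b (hmem b ⟨1, rfl⟩)
  · exact hd2 _ (hmem _ ⟨2, rfl⟩)
end exists_part

section iso
variable [FiniteDimensional ℝ V] {χ : AlternatingMap ℝ V V (Fin 2)}

noncomputable def frameOB (hχ : IsVCP χ) (h7 : Module.finrank ℝ V = 7) {a b d : V}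
    (H : Adapted χ a b d) : OrthonormalBasis (Fin 7) ℝ V :=
  OrthonormalBasis.mk (frame_orthonormal hχ H) (by
    have li := (frame_orthonormal hχ H).linearIndependent
    have hcard : Fintype.card (Fin 7) = Module.finrank ℝ V := by simp [h7]
    have hB : ⇑(basisOfLinearIndependentOfCardEqFinrank li hcard) = frameE χ a b d :=
      coe_basisOfLinearIndependentOfCardEqFinrank li hcard
    rw [← hB, (basisOfLinearIndependentOfCardEqFinrank li hcard).span_eq])

lemma frameOB_apply (hχ : IsVCP χ) (h7 : Module.finrank ℝ V = 7) {a b d : V}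
    (H : Adapted χ a b d) (i : Fin 7) : frameOB hχ h7 H i = frameE χ a b d i := by
  simp [frameOB, OrthonormalBasis.coe_mk]

noncomputable def frameIso (hχ : IsVCP χ) (h7 : Module.finrank ℝ V = 7) {a b d a' b' d' : V}
    (H : Adapted χ a b d) (H' : Adapted χ a' b' d') : V ≃ₗᵢ[ℝ] V :=
  (frameOB hχ h7 H).repr.trans (frameOB hχ h7 H').repr.symm

lemma frameIso_apply_e (hχ : IsVCP χ) (h7 : Module.finrank ℝ V = 7) {a b d a' b' d' : V}
    (H : Adapted χ a b d) (H' : Adapted χ a' b' d') (i : Fin 7) :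
    frameIso hχ h7 H H' (frameE χ a b d i) = frameE χ a' b' d' i := by
  rw [frameIso, ← frameOB_apply hχ h7 H, ← frameOB_apply hχ h7 H']
  simp only [LinearIsometryEquiv.trans_apply, OrthonormalBasis.repr_self,
    OrthonormalBasis.repr_symm_single]

lemma frameIso_cp (hχ : IsVCP χ) (h7 : Module.finrank ℝ V = 7) {a b d a' b' d' : V}
    (H : Adapted χ a b d) (H' : Adapted χ a' b' d') (x y : V) :
    frameIso hχ h7 H H' (cpL χ x y) = cpL χ (frameIso hχ h7 H H' x) (frameIso hχ h7 H H' y) := by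
  set γ := frameIso hχ h7 H H' with hγ
  let γL : V →ₗ[ℝ] V := γ.toLinearEquiv.toLinearMap
  have hM : (cpL χ).compr₂ γL = ((cpL χ).comp γL).compl₂ γL := by
    apply Module.Basis.ext (frameOB hχ h7 H).toBasis
    intro i
    apply Module.Basis.ext (frameOB hχ h7 H).toBasis
    intro j
    simp only [LinearMap.compr₂_apply, LinearMap.compl₂_apply, LinearMap.comp_apply,
      OrthonormalBasis.coe_toBasis, frameOB_apply hχ h7 H]
    have hcoe : ∀ v : V, γL v = γ v := fun v => rfl
    rw [hcoe, hcoe, hcoe, frame_table hχ H i j, map_smul, frameIso_apply_e hχ h7 H H',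
      frameIso_apply_e hχ h7 H H', frameIso_apply_e hχ h7 H H', frame_table hχ H' i j]
  have := LinearMap.congr_fun (LinearMap.congr_fun hM x) y
  exact this

end iso

section curv
variable [FiniteDimensional ℝ V] {χ : AlternatingMap ℝ V V (Fin 2)}

lemma sec_const (hχ : IsVCP χ) (h7 : Module.finrank ℝ V = 7)
    (R : V →ₗ[ℝ] V →ₗ[ℝ] V →ₗ[ℝ] V)
    (hinv : ∀ γ : V ≃ₗᵢ[ℝ] V, (∀ x y : V, γ (χ ![x, y]) = χ ![γ x, γ y]) →
      ∀ x y z : V, R (γ x) (γ y) (γ z) = γ (R x y z))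
    {a b a' b' : V} (ha : ⟪a,a⟫ = 1) (hb : ⟪b,b⟫ = 1) (hab : ⟪a,b⟫ = 0)
    (ha' : ⟪a',a'⟫ = 1) (hb' : ⟪b',b'⟫ = 1) (hab' : ⟪a',b'⟫ = 0) :
    ⟪R a b b, a⟫ = ⟪R a' b' b', a'⟫ := by
  obtain ⟨d, H⟩ := exists_adapted h7 ha hb hab
  obtain ⟨d', H'⟩ := exists_adapted h7 ha' hb' hab'
  set γ := frameIso hχ h7 H H' with hγdef
  have hstab : ∀ x y : V, γ (χ ![x, y]) = χ ![γ x, γ y] := by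
    intro x y
    have := frameIso_cp hχ h7 H H' x y
    simpa only [cpL_apply] using this
  have ha0 : γ a = a' := by
    have := frameIso_apply_e hχ h7 H H' 0
    rwa [show frameE χ a b d 0 = a from rfl, show frameE χ a' b' d' 0 = a' from rfl] at this
  have hb0 : γ b = b' := by
    have := frameIso_apply_e hχ h7 H H' 1
    rwa [show frameE χ a b d 1 = b from rfl, show frameE χ a' b' d' 1 = b' from rfl] at this
  have hRmap := hinv γ hstab a b b
  rw [ha0, hb0] at hRmap
  rw [hRmap, ← ha0]
  exact (γ.inner_map_map (R a b b) a).symm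

end curv

end aux

/-- On a 7-dimensional real inner product space with a 2-fold VCP `χ`, every
algebraic curvature operator invariant under the stabilizer `G₂` of `χ` (inside the
linear isometries of `V`) is a scalar multiple of `R^Id`: the space of
`G₂`-invariant algebraic curvature operators has dimension 1. -/
theorem g2_invariant_curvature {V : Type*} [NormedAddCommGroup V]
    [InnerProductSpace ℝ V] [FiniteDimensional ℝ V] (h7 : Module.finrank ℝ V = 7)
    (χ : AlternatingMap ℝ V V (Fin 2)) (hχ : IsVCP χ)
    (R : V →ₗ[ℝ] V →ₗ[ℝ] V →ₗ[ℝ] V) (hR : IsAlgCurvature R)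
    (hinv : ∀ γ : V ≃ₗᵢ[ℝ] V, (∀ x y : V, γ (χ ![x, y]) = χ ![γ x, γ y]) →
      ∀ x y z : V, R (γ x) (γ y) (γ z) = γ (R x y z)) :
    ∃ c : ℝ, R = c • RId := by
  obtain ⟨hR1, hR2, hR3⟩ := hR
  have hRxx : ∀ x : V, R x x = 0 := by
    intro x
    have h := hR1 x x
    have h3 : (2 : ℝ) • R x x = 0 := by
      rw [two_smul]; nth_rewrite 2 [h]; abel
    simpa using (smul_eq_zero.mp h3).resolve_left (by norm_num)
  have hskew0 : ∀ x y z : V, ⟪R x y z, z⟫ = 0 := by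
    intro x y z; have := hR2 x y z z; linarith
  obtain ⟨a₀, ha₀, -⟩ := exists_unit_orthogonal (⊥ : Submodule ℝ V) (by simp [h7])
  have hspan1 : Module.finrank ℝ (Submodule.span ℝ ({a₀} : Set V)) < Module.finrank ℝ V := by
    have h1 : Module.finrank ℝ (Submodule.span ℝ ({a₀} : Set V)) ≤ 1 := by
      classical
      refine (finrank_span_le_card _).trans ?_
      simp
    omega
  obtain ⟨b₀, hb₀, hb₀W⟩ := exists_unit_orthogonal (Submodule.span ℝ {a₀}) hspan1
  have hab₀ : ⟪a₀, b₀⟫ = 0 := hb₀W a₀ (Submodule.mem_span_singleton_self a₀)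
  set c := ⟪R a₀ b₀ b₀, a₀⟫ with hc
  have hsec : ∀ {a b : V}, ⟪a,a⟫=1 → ⟪b,b⟫=1 → ⟪a,b⟫=0 → ⟪R a b b, a⟫ = c :=
    fun ha hb hab => sec_const hχ h7 R hinv ha hb hab ha₀ hb₀ hab₀
  -- sectional curvature for all pairs
  have hkappa : ∀ x y : V, ⟪R x y y, x⟫ = c * (⟪x,x⟫*⟪y,y⟫ - ⟪x,y⟫*⟪x,y⟫) := by
    intro x y
    by_cases hx : x = 0
    · simp [hx]
    have hxxne : ⟪x,x⟫ ≠ (0:ℝ) := inner_self_ne_zero.2 hx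
    set T := ⟪x,y⟫ / ⟪x,x⟫ with hT
    set y' := y - T • x with hy'd
    have hxy' : ⟪x,y'⟫ = 0 := by
      rw [hy'd, inner_sub_right, real_inner_smul_right, hT]
      field_simp
      ring
    have hyeq : y = y' + T • x := by rw [hy'd]; abel
    have hRred : ⟪R x y y, x⟫ = ⟪R x y' y', x⟫ := by
      conv_lhs => rw [hyeq]
      simp only [map_add, map_smul, LinearMap.add_apply, LinearMap.smul_apply,
        inner_add_left, real_inner_smul_left, hRxx, LinearMap.zero_apply,
        inner_zero_left, hskew0]
      ring
    have hxy : ⟪x,y⟫ = T * ⟪x,x⟫ := by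
      rw [hT]; field_simp
    have hy'x : ⟪y',x⟫ = 0 := by rw [real_inner_comm]; exact hxy'
    have hyy : ⟪y,y⟫ = ⟪y',y'⟫ + T*T*⟪x,x⟫ := by
      conv_lhs => rw [hyeq]
      simp only [inner_add_left, inner_add_right, real_inner_smul_left,
        real_inner_smul_right, hxy', hy'x]
      ring
    by_cases hy0 : y' = 0
    · have hyT : y = T • x := by rw [hyeq, hy0, zero_add]
      rw [hyT]
      simp only [map_smul, LinearMap.smul_apply, hRxx, LinearMap.zero_apply,
        real_inner_smul_left, real_inner_smul_right, inner_zero_left, smul_eq_mul]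
      ring
    · have hy'ne : ⟪y',y'⟫ ≠ (0:ℝ) := inner_self_ne_zero.2 hy0
      have hnx : ‖x‖ ≠ 0 := norm_ne_zero_iff.2 hx
      have hny : ‖y'‖ ≠ 0 := norm_ne_zero_iff.2 hy0
      have hxx : ⟪x,x⟫ = ‖x‖ * ‖x‖ := real_inner_self_eq_norm_mul_norm x
      have hyy' : ⟪y',y'⟫ = ‖y'‖ * ‖y'‖ := real_inner_self_eq_norm_mul_norm y'
      set u := ‖x‖⁻¹ • x with hu
      set v := ‖y'‖⁻¹ • y' with hv
      have huu : ⟪u,u⟫ = 1 := by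
        rw [hu, real_inner_smul_left, real_inner_smul_right, hxx]; field_simp
      have hvv : ⟪v,v⟫ = 1 := by
        rw [hv, real_inner_smul_left, real_inner_smul_right, hyy']; field_simp
      have huv : ⟪u,v⟫ = 0 := by
        rw [hu, hv, real_inner_smul_left, real_inner_smul_right, hxy', mul_zero, mul_zero]
      have hcuv := hsec huu hvv huv
      have hexp : ⟪R u v v, u⟫ = (‖x‖⁻¹*‖x‖⁻¹) * ((‖y'‖⁻¹*‖y'‖⁻¹) * ⟪R x y' y', x⟫) := by
        rw [hu, hv]
        simp only [map_smul, LinearMap.smul_apply, real_inner_smul_left,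
          real_inner_smul_right, smul_eq_mul]
        ring
      have hkey : ⟪R x y' y', x⟫ = c * (⟪x,x⟫ * ⟪y',y'⟫) := by
        rw [hexp] at hcuv
        rw [hxx, hyy']
        field_simp at hcuv ⊢
        linarith
      rw [hRred, hkey, hyy, hxy]
      ring
  -- quadrilinear form
  set f : V → V → V → V → ℝ :=
    fun x y z w => ⟪R x y z, w⟫ - c * (⟪y,z⟫*⟪x,w⟫ - ⟪x,z⟫*⟪y,w⟫) with hf
  have hf1 : ∀ x y z w, f x y z w = - f y x z w := by
    intro x y z w; simp only [hf]
    rw [hR1 x y]; simp only [LinearMap.neg_apply, inner_neg_left]; ring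
  have hf2 : ∀ x y z w, f x y z w = - f x y w z := by
    intro x y z w; simp only [hf]
    have hzw : ⟪z,w⟫ = ⟪w,z⟫ := real_inner_comm _ _
    linear_combination hR2 x y z w
  have hf3 : ∀ x y z w, f x y z w + f y z x w + f z x y w = 0 := by
    intro x y z w; simp only [hf]
    have h := hR3 x y z
    have h' := congrArg (fun v : V => ⟪v, w⟫) h
    simp only [inner_add_left, inner_zero_left] at h'
    have c1 : ⟪y,z⟫ = ⟪z,y⟫ := real_inner_comm _ _
    have c2 : ⟪x,z⟫ = ⟪z,x⟫ := real_inner_comm _ _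
    have c3 : ⟪x,y⟫ = ⟪y,x⟫ := real_inner_comm _ _
    linear_combination h' - c * ⟪x,w⟫ * c1 + c * ⟪y,w⟫ * c2 - c * ⟪z,w⟫ * c3
  have hf4 : ∀ x y, f x y y x = 0 := by
    intro x y; simp only [hf]
    have c3 : ⟪x,y⟫ = ⟪y,x⟫ := real_inner_comm _ _
    linear_combination hkappa x y - c * ⟪x,y⟫ * c3
  have hA : ∀ x y w, f x y y w + f w y y x = 0 := by
    intro x y w
    have h := hf4 (x + w) y
    have h1 := hf4 x y
    have h2 := hf4 w y
    simp only [hf, map_add, LinearMap.add_apply, inner_add_left, inner_add_right] at h h1 h2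
    simp only [hf]
    linear_combination h - h1 - h2
  have hpair : ∀ x y z w, f x y z w = f z w x y := by
    intro x y z w
    have b1 := hf3 x y z w
    have b2 := hf3 y z w x
    have b3 := hf3 z w x y
    have b4 := hf3 w x y z
    have c1 := hf1 z x y w
    have c2 := hf2 y z w x
    have c3 := hf2 z w y x
    have c4 := hf1 w y z x
    have c5 := hf2 y w z x
    have c6 := hf1 w x z y
    have c7 := hf2 x w z y
    have c8 := hf2 x z w y
    have c9 := hf1 w x y z
    have c10 := hf2 x y w z
    have c11 := hf1 y w x z
    have c12 := hf1 y z x w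
    linarith [b1, b2, b3, b4, c1, c2, c3, c4, c5, c6, c7, c8, c9, c10, c11, c12]
  have hsymB : ∀ x y w, f x y y w = 0 := by
    intro x y w
    have h1 := hA x y w
    have s1 := hpair x y y w
    have s2 := hf1 y w x y
    have s3 := hf2 w y x y
    linarith
  have hC : ∀ x y z w, f x y z w + f x z y w = 0 := by
    intro x y z w
    have h := hsymB x (y + z) w
    have h1 := hsymB x y w
    have h2 := hsymB x z w
    simp only [hf, map_add, LinearMap.add_apply, inner_add_left, inner_add_right] at h h1 h2
    simp only [hf]
    linear_combination h - h1 - h2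
  have hzero : ∀ x y z w, f x y z w = 0 := by
    intro x y z w
    have b := hf3 x y z w
    have e1 : f y z x w = f x y z w := by
      have p1 := hpair y z x w
      have p2 := hC x w y z
      have p3 := hf2 x y w z
      linarith
    have e2 : f z x y w = f x y z w := by
      have p1 := hpair z x y w
      have p2 := hC y w z x
      have p3 := hf2 y z w x
      have p4 : f y z x w = f x y z w := e1
      linarith
    linarith
  refine ⟨c, ?_⟩
  apply LinearMap.ext; intro x
  apply LinearMap.ext; intro y
  apply LinearMap.ext; intro z
  apply ext_inner_right ℝ; intro w
  have h := hzero x y z w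
  simp only [hf] at h
  have hRId : RId (V := V) x y z = ⟪y,z⟫ • x - ⟪x,z⟫ • y := rfl
  simp only [LinearMap.smul_apply, hRId, inner_sub_left, real_inner_smul_left, smul_eq_mul]
  linear_combination h
end
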